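/- arXiv:1808.01156 — 8 statements merged into one kernel-verified Lean document; each statement's English description precedes it below -/
import Mathlib

section
/- For every positive integer n, the sum over k from 0 to n of (1/(2k-1)) * C(2n-2k, n-k) * C(2k, k) equals 0, where C denotes binomial coefficients. -/
open Finset

lemma centralBinom_succ_eq (j : ℕ) :
    Nat.centralBinom (j + 1) = 2 * (2 * j + 1) * catalan j := by
  have h1 := Nat.succ_mul_centralBinom_succ j
  have h2 := succ_mul_catalan_eq_centralBinom j
  have : (j + 1) * Nat.centralBinom (j + 1) = (j + 1) * (2 * (2 * j + 1) * catalan j) := by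
    rw [h1, ← h2]; ring
  exact Nat.eq_of_mul_eq_mul_left (Nat.succ_pos j) this

lemma conv_lemma (m : ℕ) :
    2 * ∑ j ∈ range (m + 1), catalan j * Nat.centralBinom (m - j)
      = Nat.centralBinom (m + 1) := by
  have hrefl : ∑ j ∈ range (m + 1), catalan j * Nat.centralBinom (m - j)
      = ∑ j ∈ range (m + 1), catalan (m - j) * Nat.centralBinom j := by
    rw [← Finset.sum_range_reflect]
    refine Finset.sum_congr rfl fun j hj => ?_
    rw [Finset.mem_range] at hj
    have hj' : j ≤ m := Nat.lt_succ_iff.mp hj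
    rw [Nat.add_sub_cancel, Nat.sub_sub_self hj']
  have key : ∑ j ∈ range (m + 1),
      (catalan j * Nat.centralBinom (m - j) + catalan (m - j) * Nat.centralBinom j)
      = (m + 2) * catalan (m + 1) := by
    have h1 : ∀ j ∈ range (m + 1),
        catalan j * Nat.centralBinom (m - j) + catalan (m - j) * Nat.centralBinom j
          = (m + 2) * (catalan j * catalan (m - j)) := by
      intro j hj
      rw [Finset.mem_range] at hj
      have hj' : j ≤ m := Nat.lt_succ_iff.mp hj
      rw [← succ_mul_catalan_eq_centralBinom, ← succ_mul_catalan_eq_centralBinom]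
      have : m - j + 1 + (j + 1) = m + 2 := by omega
      calc catalan j * ((m - j + 1) * catalan (m - j))
            + catalan (m - j) * ((j + 1) * catalan j)
          = (m - j + 1 + (j + 1)) * (catalan j * catalan (m - j)) := by ring
        _ = (m + 2) * (catalan j * catalan (m - j)) := by rw [this]
    rw [Finset.sum_congr rfl h1, ← Finset.mul_sum]
    congr 1
    rw [catalan_succ, Finset.sum_range (fun i => catalan i * catalan (m - i))]
  have := succ_mul_catalan_eq_centralBinom (m + 1)
  calc 2 * ∑ j ∈ range (m + 1), catalan j * Nat.centralBinom (m - j)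
      = ∑ j ∈ range (m + 1), catalan j * Nat.centralBinom (m - j)
        + ∑ j ∈ range (m + 1), catalan (m - j) * Nat.centralBinom j := by
          rw [← hrefl]; ring
    _ = (m + 2) * catalan (m + 1) := by rw [← Finset.sum_add_distrib, key]
    _ = Nat.centralBinom (m + 1) := by rw [← this]

theorem stmt0 (n : ℕ) (hn : 0 < n) :
    ∑ k ∈ Finset.range (n + 1),
      (1 / (2 * (k : ℚ) - 1)) * (Nat.choose (2 * n - 2 * k) (n - k) : ℚ) *
        (Nat.choose (2 * k) k : ℚ) = 0 := by
  obtain ⟨m, rfl⟩ : ∃ m, n = m + 1 := ⟨n - 1, by omega⟩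
  rw [Finset.sum_range_succ']
  have h0 : (1 / (2 * ((0 : ℕ) : ℚ) - 1)) * (Nat.choose (2 * (m + 1) - 2 * 0) (m + 1 - 0) : ℚ) *
      (Nat.choose (2 * 0) 0 : ℚ) = -(Nat.centralBinom (m + 1) : ℚ) := by
    norm_num [Nat.centralBinom]
  rw [h0]
  have hterm : ∀ i ∈ range (m + 1),
      (1 / (2 * ((i + 1 : ℕ) : ℚ) - 1)) *
        (Nat.choose (2 * (m + 1) - 2 * (i + 1)) (m + 1 - (i + 1)) : ℚ) *
        (Nat.choose (2 * (i + 1)) (i + 1) : ℚ)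
      = 2 * ((catalan i : ℚ) * (Nat.centralBinom (m - i) : ℚ)) := by
    intro i hi
    rw [Finset.mem_range] at hi
    have e1 : 2 * (m + 1) - 2 * (i + 1) = 2 * (m - i) := by omega
    have e2 : m + 1 - (i + 1) = m - i := by omega
    have e3 : Nat.choose (2 * (i + 1)) (i + 1) = Nat.centralBinom (i + 1) := rfl
    rw [e1, e2, e3, centralBinom_succ_eq]
    have hne : 2 * ((i : ℚ) + 1) - 1 ≠ 0 := by
      have h0i : (0:ℚ) ≤ (i:ℚ) := Nat.cast_nonneg i
      intro h; linarith
    have : (Nat.choose (2 * (m - i)) (m - i) : ℚ) = (Nat.centralBinom (m - i) : ℚ) := rfl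
    push_cast
    rw [this]
    field_simp
    ring
  rw [Finset.sum_congr rfl hterm, ← Finset.mul_sum]
  have := conv_lemma m
  have hc : 2 * (∑ j ∈ range (m + 1), (catalan j : ℚ) * (Nat.centralBinom (m - j) : ℚ))
      = (Nat.centralBinom (m + 1) : ℚ) := by
    exact_mod_cast congrArg (Nat.cast : ℕ → ℚ) this
  rw [hc]; ring
end

section
/- For every positive integer n and all real numbers y, z such that the binomial coefficients C(y,k) are nonzero for 0 ≤ k ≤ n, the identity ∑_{k=0}^n (-1)^k C(n,k) C(z,k) / C(y,k) = C(y-z, n) / C(y, n) holds, where C(x,k) denotes the generalized binomial coefficient x(x-1)...(x-k+1)/k!. -/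
/-- Generalized binomial coefficient `x(x-1)⋯(x-k+1)/k!` for real `x`. -/
noncomputable def rchoose (x : ℝ) (k : ℕ) : ℝ :=
  (∏ i ∈ Finset.range k, (x - i)) / Nat.factorial k

lemma rchoose_zero (x : ℝ) : rchoose x 0 = 1 := by simp [rchoose]

lemma rchoose_succ (x : ℝ) (k : ℕ) :
    rchoose x (k+1) = rchoose x k * (x - k) / (k+1) := by
  unfold rchoose
  rw [Finset.prod_range_succ, Nat.factorial_succ]
  have h1 : (Nat.factorial k : ℝ) ≠ 0 := Nat.cast_ne_zero.mpr (Nat.factorial_ne_zero k)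
  have h2 : ((k:ℝ) + 1) ≠ 0 := by positivity
  push_cast
  rw [div_mul_eq_mul_div, div_div, mul_comm ((k:ℝ)+1)]

noncomputable def Gc (y z : ℝ) (n m : ℕ) : ℝ :=
  m * (y - m + 1) * (-1)^m * ((n+1).choose m : ℝ) * rchoose z m / rchoose y m / ((n:ℝ)+1)

lemma key (n k : ℕ) (hk : k ≤ n) (y z : ℝ) (hb : rchoose y k ≠ 0)
    (hb1 : rchoose y (k+1) ≠ 0) :
    (y - z - n) * ((-1)^k * (n.choose k : ℝ) * rchoose z k / rchoose y k)
      - (y - n) * ((-1)^k * ((n+1).choose k : ℝ) * rchoose z k / rchoose y k)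
      = Gc y z n (k+1) - Gc y z n k := by
  have hyk : y - k ≠ 0 := by
    intro h
    apply hb1
    rw [rchoose_succ, h]
    simp
  have hk1 : ((k:ℝ) + 1) ≠ 0 := by positivity
  have hn1 : ((n:ℝ) + 1) ≠ 0 := by positivity
  have hkc : (((n+1) - k : ℕ) : ℝ) = (n:ℝ) + 1 - k := by
    rw [Nat.cast_sub (by omega)]; push_cast; ring
  have hA : ((n+1).choose (k+1) : ℝ) * ((k:ℝ)+1) = ((n+1).choose k : ℝ) * ((n:ℝ)+1-k) := by
    rw [← hkc]
    exact_mod_cast congrArg (Nat.cast : ℕ → ℝ) (Nat.choose_succ_right_eq (n+1) k)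
  have hB : ((n:ℝ)+1) * (n.choose k : ℝ) = ((n+1).choose (k+1) : ℝ) * ((k:ℝ)+1) := by
    exact_mod_cast congrArg (Nat.cast : ℕ → ℝ) (Nat.add_one_mul_choose_eq n k)
  have e1 : (n.choose k : ℝ) = ((n+1).choose k : ℝ) * ((n:ℝ)+1-k) / ((n:ℝ)+1) := by
    field_simp
    linarith [hA, hB]
  have e2 : ((n+1).choose (k+1) : ℝ) = ((n+1).choose k : ℝ) * ((n:ℝ)+1-k) / ((k:ℝ)+1) := by
    field_simp
    linarith [hA]
  unfold Gc
  rw [rchoose_succ z k, rchoose_succ y k, e1, e2]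
  push_cast
  field_simp
  ring

lemma key_top (n : ℕ) (y z : ℝ) (hb1 : rchoose y (n+1) ≠ 0) :
    (y - z - n) * ((-1)^(n+1) * (n.choose (n+1) : ℝ) * rchoose z (n+1) / rchoose y (n+1))
      - (y - n) * ((-1)^(n+1) * ((n+1).choose (n+1) : ℝ) * rchoose z (n+1) / rchoose y (n+1))
      = Gc y z n (n+2) - Gc y z n (n+1) := by
  have h0 : (n.choose (n+1) : ℝ) = 0 := by
    simp [Nat.choose_eq_zero_of_lt]
  have h2 : ((n+1).choose (n+2) : ℝ) = 0 := by
    simp [Nat.choose_eq_zero_of_lt]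
  have hn1 : ((n:ℝ) + 1) ≠ 0 := by positivity
  unfold Gc
  rw [h0, h2, Nat.choose_self]
  push_cast
  field_simp
  ring

lemma step (n : ℕ) (y z : ℝ) (hy : ∀ k ≤ n+1, rchoose y k ≠ 0) :
    (y - (n:ℝ)) * ∑ k ∈ Finset.range (n+2),
        (-1:ℝ)^k * ((n+1).choose k : ℝ) * rchoose z k / rchoose y k
      = (y - z - n) * ∑ k ∈ Finset.range (n+1),
        (-1:ℝ)^k * (n.choose k : ℝ) * rchoose z k / rchoose y k := by
  have tele : ∑ k ∈ Finset.range (n+2), (Gc y z n (k+1) - Gc y z n k)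
      = Gc y z n (n+2) - Gc y z n 0 := Finset.sum_range_sub (Gc y z n) (n+2)
  have hG0 : Gc y z n 0 = 0 := by simp [Gc]
  have hGtop : Gc y z n (n+2) = 0 := by
    have : ((n+1).choose (n+2) : ℝ) = 0 := by simp [Nat.choose_eq_zero_of_lt]
    simp [Gc, this]
  have hsum : ∑ k ∈ Finset.range (n+2),
      ((y - z - n) * ((-1:ℝ)^k * (n.choose k : ℝ) * rchoose z k / rchoose y k)
        - (y - n) * ((-1:ℝ)^k * ((n+1).choose k : ℝ) * rchoose z k / rchoose y k)) = 0 := by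
    rw [Finset.sum_congr rfl (fun k hk => ?_), tele, hG0, hGtop, sub_zero]
    rcases Nat.lt_or_ge k (n+1) with h | h
    · exact key n k (by omega) y z (hy k (by omega)) (hy (k+1) (by omega))
    · have hk2 : k < n + 2 := Finset.mem_range.mp hk
      have : k = n + 1 := by omega
      subst this
      exact key_top n y z (hy (n+1) le_rfl)
  rw [Finset.sum_sub_distrib, ← Finset.mul_sum, ← Finset.mul_sum] at hsum
  have hA : ∑ k ∈ Finset.range (n+2), (-1:ℝ)^k * (n.choose k : ℝ) * rchoose z k / rchoose y k
      = ∑ k ∈ Finset.range (n+1), (-1:ℝ)^k * (n.choose k : ℝ) * rchoose z k / rchoose y k := by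
    rw [Finset.sum_range_succ]
    simp [Nat.choose_succ_self]
  rw [hA] at hsum
  linarith

lemma main_aux (n : ℕ) (y z : ℝ) (hy : ∀ k ≤ n, rchoose y k ≠ 0) :
    ∑ k ∈ Finset.range (n + 1),
      (-1 : ℝ) ^ k * (Nat.choose n k : ℝ) * rchoose z k / rchoose y k
      = rchoose (y - z) n / rchoose y n := by
  induction n with
  | zero => simp [rchoose_zero]
  | succ m ih =>
    have hy' : ∀ k ≤ m, rchoose y k ≠ 0 := fun k hk => hy k (by omega)
    have hstep := step m y z hy
    have hym1 : rchoose y (m+1) ≠ 0 := hy (m+1) le_rfl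
    have hym : rchoose y m ≠ 0 := hy m (by omega)
    have hsub : y - m ≠ 0 := by
      intro h
      apply hym1
      rw [rchoose_succ, h]
      simp
    have hm1 : ((m:ℝ)+1) ≠ 0 := by positivity
    rw [ih hy'] at hstep
    have h1 : rchoose y (m+1) = rchoose y m * (y - m) / (m+1) := rchoose_succ y m
    have h2 : rchoose (y-z) (m+1) = rchoose (y-z) m * (y - z - m) / (m+1) := rchoose_succ (y-z) m
    push_cast
    rw [h1, h2]
    field_simp at hstep ⊢
    linear_combination hstep

theorem stmt1 (n : ℕ) (hn : 0 < n) (y z : ℝ)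
    (hy : ∀ k ≤ n, rchoose y k ≠ 0) :
    ∑ k ∈ Finset.range (n + 1),
      (-1 : ℝ) ^ k * (Nat.choose n k : ℝ) * rchoose z k / rchoose y k
      = rchoose (y - z) n / rchoose y n := by
  exact main_aux n y z hy
end

section
/- For every positive integer n, the alternating sum ∑_{k=0}^n (-1)^k C(n,k) C(n+k, k+1) equals 0. -/
open Finset

lemma aux_alt (n m : ℕ) (h : m < n) :
    ∑ k ∈ Finset.range (n + 1),
      (-1 : ℤ) ^ k * (Nat.choose n k : ℤ) * (Nat.choose k m : ℤ) = 0 := by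
  have hsub : Finset.Ico m (n + 1) ⊆ Finset.range (n + 1) := by
    rw [Finset.range_eq_Ico]
    exact Finset.Ico_subset_Ico (Nat.zero_le _) le_rfl
  rw [← Finset.sum_subset hsub (by
    intro k hk hk'
    have : k < m := by
      simp [Finset.mem_range] at hk
      simp [Finset.mem_Ico, hk] at hk'
      omega
    simp [Nat.choose_eq_zero_of_lt this])]
  rw [Finset.sum_Ico_eq_sum_range]
  have hmn : m ≤ n := h.le
  have hrw : ∀ i ∈ Finset.range (n + 1 - m),
      (-1 : ℤ) ^ (m + i) * (Nat.choose n (m + i) : ℤ) * (Nat.choose (m + i) m : ℤ)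
      = ((-1) ^ m * (Nat.choose n m : ℤ)) * ((-1) ^ i * (Nat.choose (n - m) i : ℤ)) := by
    intro i hi
    simp only [Finset.mem_range] at hi
    have h1 : m + i ≤ n := by omega
    have h2 : m ≤ m + i := Nat.le_add_right _ _
    have := Nat.choose_mul (n := n) h2
    simp only [Nat.add_sub_cancel_left] at this
    have h3 := congrArg (Nat.cast : ℕ → ℤ) this
    push_cast at h3
    linear_combination ((-1 : ℤ) ^ m * (-1) ^ i) * h3
  rw [Finset.sum_congr rfl hrw, ← Finset.mul_sum]
  have : n + 1 - m = (n - m) + 1 := by omega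
  rw [this, Int.alternating_sum_range_choose_of_ne (by omega), mul_zero]

theorem stmt2 (n : ℕ) (hn : 0 < n) :
    ∑ k ∈ Finset.range (n + 1),
      (-1 : ℤ) ^ k * (Nat.choose n k : ℤ) * (Nat.choose (n + k) (k + 1) : ℤ) = 0 := by
  have key : ∀ k, (Nat.choose (n + k) (k + 1) : ℤ)
      = ∑ i ∈ Finset.range n, (Nat.choose n i : ℤ) * (Nat.choose k (n - 1 - i) : ℤ) := by
    intro k
    have h1 : Nat.choose (n + k) (k + 1) = Nat.choose (n + k) (n - 1) :=
      (Nat.choose_symm_of_eq_add (by omega)).symm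
    rw [h1, Nat.add_choose_eq, Finset.Nat.sum_antidiagonal_eq_sum_range_succ
      (fun a b => Nat.choose n a * Nat.choose k b)]
    have h2 : n - 1 + 1 = n := by omega
    rw [Nat.succ_eq_add_one, h2]
    push_cast
    rfl
  calc ∑ k ∈ Finset.range (n + 1),
      (-1 : ℤ) ^ k * (Nat.choose n k : ℤ) * (Nat.choose (n + k) (k + 1) : ℤ)
      = ∑ i ∈ Finset.range n, (Nat.choose n i : ℤ) *
          ∑ k ∈ Finset.range (n + 1),
            (-1 : ℤ) ^ k * (Nat.choose n k : ℤ) * (Nat.choose k (n - 1 - i) : ℤ) := by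
        simp only [key, Finset.mul_sum, Finset.sum_mul]
        rw [Finset.sum_comm]
        congr 1; ext i; congr 1; ext k; ring
    _ = 0 := by
        refine Finset.sum_eq_zero fun i hi => ?_
        rw [aux_alt n (n - 1 - i) (by omega), mul_zero]
end

section
/- For every positive integer n, the alternating sum ∑_{k=0}^n (-1)^k C(n+k, k) C(n+1, k+1) equals 0. -/
lemma key2 (p m : ℕ) :
    (p + m + 3) * p.choose (m + 1) + (m + 2) * p.choose m
      = (m + 2) * (p + 2).choose (m + 2) := by
  rcases le_or_gt (m + 1) p with h | h
  · obtain ⟨t, rfl⟩ : ∃ t, p = m + 1 + t := ⟨p - (m + 1), by omega⟩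
    have h1 : (m + 1 + t).choose (m + 2) * (m + 2) = (m + 1 + t).choose (m + 1) * t := by
      rw [Nat.choose_succ_right_eq]
      congr 1
      omega
    rw [show m + 1 + t + 2 = (m + 1 + t + 1) + 1 by ring, Nat.choose_succ_succ,
      Nat.choose_succ_succ, Nat.choose_succ_succ]
    simp only [Nat.succ_eq_add_one]
    rw [show m + 1 + 1 = m + 2 from rfl]
    zify at h1 ⊢
    linear_combination -h1
  · have h0 : p.choose (m + 1) = 0 := Nat.choose_eq_zero_of_lt h
    rw [h0]
    rcases eq_or_lt_of_le (Nat.lt_succ_iff.mp h) with h2 | h2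
    · subst h2; simp
    · rw [Nat.choose_eq_zero_of_lt h2, Nat.choose_eq_zero_of_lt (show p + 2 < m + 2 by omega)]
      simp

lemma key_s3 (p m : ℕ) :
    (p + m + 3).choose (m + 2) * p.choose (m + 1)
      + (p + m + 2).choose (m + 1) * p.choose m
      = (p + m + 2).choose (m + 1) * (p + 2).choose (m + 2) := by
  apply Nat.eq_of_mul_eq_mul_right (show 0 < m + 2 by omega)
  have e1 : (p + m + 3) * (p + m + 2).choose (m + 1)
      = (p + m + 3).choose (m + 2) * (m + 2) := Nat.add_one_mul_choose_eq (p + m + 2) (m + 1)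
  have k2 := key2 p m
  zify at e1 k2 ⊢
  linear_combination ((p + m + 2).choose (m + 1) : ℤ) * k2 - (p.choose (m + 1) : ℤ) * e1

theorem stmt3 (n : ℕ) (hn : 0 < n) :
    ∑ k ∈ Finset.range (n + 1),
      (-1 : ℤ) ^ k * (Nat.choose (n + k) k : ℤ) * (Nat.choose (n + 1) (k + 1) : ℤ) = 0 := by
  obtain ⟨p, rfl⟩ : ∃ p, n = p + 1 := ⟨n - 1, by omega⟩
  have H : ∀ m : ℕ, ∑ k ∈ Finset.range (m + 1),
      (-1 : ℤ) ^ k * (Nat.choose (p + 1 + k) k : ℤ) * (Nat.choose (p + 2) (k + 1) : ℤ)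
      = (-1 : ℤ) ^ m * (Nat.choose (p + m + 2) (m + 1) : ℤ) * (Nat.choose p m : ℤ) := by
    intro m
    induction m with
    | zero => simp
    | succ m ih =>
      rw [Finset.sum_range_succ, ih]
      have hz := key_s3 p m
      zify at hz
      have e : p + 1 + (m + 1) = p + m + 2 := by ring
      rw [e, show p + (m + 1) + 2 = p + m + 3 from by ring, show m + 1 + 1 = m + 2 from rfl]
      linear_combination ((-1 : ℤ) ^ m) * hz
  rw [H (p + 1)]
  simp [Nat.choose_eq_zero_of_lt]
end

section
/- Let S_0 = 1 and for n ≥ 1 define S_n : [0,1]^n → ℝ recursively by S_n(u) = ∑_{i=1}^n (-1)^{i+n} u_i^{n-i+1}/(n-i+1)! · S_{i-1}(u_1,...,u_{i-1}). Then for every n ≥ 1 and every u_{n+1} ∈ [0,1], the iterated integral ∫_0^{u_{n+1}} ··· ∫_0^{u_2} S_n(u_1,...,u_n) du_1 ··· du_n equals u_{n+1}^{2n} / (n! (n+1)!). -/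
open intervalIntegral

/-- The recursively defined functions `S_n` from the paper:
`S_0 = 1` and `S_n(u) = ∑_{i=1}^n (-1)^{i+n} u_i^{n-i+1}/(n-i+1)! · S_{i-1}(u_1,…,u_{i-1})`. -/
noncomputable def S : ∀ n : ℕ, (Fin n → ℝ) → ℝ
  | 0, _ => 1
  | (n + 1), u => ∑ i : Fin (n + 1),
      (-1 : ℝ) ^ ((i : ℕ) + n) * u i ^ (n + 1 - (i : ℕ)) /
          (Nat.factorial (n + 1 - (i : ℕ)))
        * S i (fun j => u (Fin.castLE i.isLt.le j))

/-- `iterInt n f t` is the iterated integral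
`∫_0^t ∫_0^{u_n} ⋯ ∫_0^{u_2} f(u_1,…,u_n) du_1 ⋯ du_n`. -/
noncomputable def iterInt : ∀ n : ℕ, ((Fin n → ℝ) → ℝ) → ℝ → ℝ
  | 0, f, _ => f (fun i => i.elim0)
  | (n + 1), f, t => ∫ x in (0 : ℝ)..t, iterInt n (fun u => f (Fin.snoc u x)) x

namespace Stmt4Aux

/-- shifted version of `S (n+1)`: every exponent (and factorial) raised by `m`. -/
noncomputable def T (n m : ℕ) (u : Fin (n + 1) → ℝ) : ℝ :=
  ∑ i : Fin (n + 1),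
      (-1 : ℝ) ^ ((i : ℕ) + n) * u i ^ (n + 1 - (i : ℕ) + m) /
          (Nat.factorial (n + 1 - (i : ℕ) + m))
        * S i (fun j => u (Fin.castLE i.isLt.le j))

lemma S_eq_T (n : ℕ) (u : Fin (n + 1) → ℝ) : S (n + 1) u = T n 0 u := by
  simp [S, T]

noncomputable def A (n : ℕ) : ℝ := 1 / (Nat.factorial n * Nat.factorial (n + 1))

noncomputable def Bc (n k : ℕ) : ℝ :=
  Nat.factorial (n + k) /
    (Nat.factorial n * Nat.factorial k * Nat.factorial (n + 1) * Nat.factorial (n + k + 2))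

lemma Bc_zero (k : ℕ) : Bc 0 k = 1 / ((Nat.factorial (k + 1)) * (k + 2)) := by
  have h1 : (Nat.factorial (k + 2) : ℝ) = (k + 2) * (k + 1) * Nat.factorial k := by
    push_cast [Nat.factorial_succ]; ring
  have h2 : (Nat.factorial (k + 1) : ℝ) = (k + 1) * Nat.factorial k := by
    push_cast [Nat.factorial_succ]; ring
  have hk : (Nat.factorial k : ℝ) ≠ 0 := Nat.cast_ne_zero.mpr (Nat.factorial_ne_zero k)
  have hk1 : (k : ℝ) + 1 ≠ 0 := by positivity
  have hk2 : (k : ℝ) + 2 ≠ 0 := by positivity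
  simp only [Bc, Nat.zero_add, Nat.factorial_zero, Nat.factorial_one, h1, h2]
  field_simp
  try ring
  try tauto

lemma algA (n : ℕ) : A (n + 1) - Bc n 1 = (2 * n + 4 : ℝ) * A (n + 2) := by
  have e2 : (Nat.factorial (n + 2) : ℝ) = (n + 2) * Nat.factorial (n + 1) := by
    push_cast [Nat.factorial_succ]; ring
  have e3 : (Nat.factorial (n + 3) : ℝ) = (n + 3) * (n + 2) * Nat.factorial (n + 1) := by
    push_cast [Nat.factorial_succ]; ring
  have e1 : (Nat.factorial (n + 1) : ℝ) = (n + 1) * Nat.factorial n := by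
    push_cast [Nat.factorial_succ]; ring
  have hn : (Nat.factorial n : ℝ) ≠ 0 := Nat.cast_ne_zero.mpr (Nat.factorial_ne_zero n)
  have h1 : (n : ℝ) + 1 ≠ 0 := by positivity
  have h2 : (n : ℝ) + 2 ≠ 0 := by positivity
  have h3 : (n : ℝ) + 3 ≠ 0 := by positivity
  simp only [A, Bc, show n + 1 + 1 = n + 2 from rfl, show n + 1 + 2 = n + 3 from rfl,
    show n + 2 + 1 = n + 3 from rfl, Nat.factorial_one, e3, e2, e1]
  field_simp
  ring

lemma algB (n k : ℕ) :
    A (n + 1) / (Nat.factorial (k + 1)) - Bc n (k + 1) = (2 * n + 4 + k : ℝ) * Bc (n + 1) k := by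
  have e2 : (Nat.factorial (n + 2) : ℝ) = (n + 2) * Nat.factorial (n + 1) := by
    push_cast [Nat.factorial_succ]; ring
  have e1 : (Nat.factorial (n + 1) : ℝ) = (n + 1) * Nat.factorial n := by
    push_cast [Nat.factorial_succ]; ring
  have ek : (Nat.factorial (k + 1) : ℝ) = (k + 1) * Nat.factorial k := by
    push_cast [Nat.factorial_succ]; ring
  have e4 : (Nat.factorial (n + k + 3) : ℝ)
      = (n + k + 3) * (n + k + 2) * Nat.factorial (n + k + 1) := by
    push_cast [Nat.factorial_succ]; ring
  have hn : (Nat.factorial n : ℝ) ≠ 0 := Nat.cast_ne_zero.mpr (Nat.factorial_ne_zero n)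
  have hkf : (Nat.factorial k : ℝ) ≠ 0 := Nat.cast_ne_zero.mpr (Nat.factorial_ne_zero k)
  have hnk : (Nat.factorial (n + k + 1) : ℝ) ≠ 0 :=
    Nat.cast_ne_zero.mpr (Nat.factorial_ne_zero _)
  have h1 : (n : ℝ) + 1 ≠ 0 := by positivity
  have h2 : (n : ℝ) + 2 ≠ 0 := by positivity
  have hk1 : (k : ℝ) + 1 ≠ 0 := by positivity
  have h4 : (n : ℝ) + k + 2 ≠ 0 := by positivity
  have h5 : (n : ℝ) + k + 3 ≠ 0 := by positivity
  simp only [A, Bc, show n + 1 + 1 = n + 2 from rfl, show n + (k + 1) = n + k + 1 from rfl,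
    show n + (k + 1) + 2 = n + k + 3 from rfl, show n + 1 + k = n + k + 1 by omega,
    show n + 1 + k + 2 = n + k + 3 by omega, e4, e2, e1, ek]
  field_simp
  ring


lemma T0_snoc (m : ℕ) (u : Fin 0 → ℝ) (x : ℝ) :
    T 0 m (Fin.snoc u x) = x ^ (m + 1) / (Nat.factorial (m + 1)) := by
  simp [T, S, Fin.snoc, Nat.add_comm 1 m]

lemma S1_snoc (u : Fin 0 → ℝ) (x : ℝ) : S 1 (Fin.snoc u x) = x := by
  simp [S, Fin.snoc]

lemma snoc_castLE {n : ℕ} (u : Fin (n + 1) → ℝ) (x : ℝ) {k : ℕ} (h : k ≤ n + 1)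
    (j : Fin k) :
    (Fin.snoc u x : Fin (n + 2) → ℝ) (Fin.castLE (h.trans (Nat.le_succ _)) j)
      = u (Fin.castLE h j) := by
  rw [show Fin.castLE (h.trans (Nat.le_succ _)) j = Fin.castSucc (Fin.castLE h j) from rfl,
    Fin.snoc_castSucc]

lemma T_snoc (n m : ℕ) (u : Fin (n + 1) → ℝ) (x : ℝ) :
    T (n + 1) m (Fin.snoc u x)
      = x ^ (m + 1) / (Nat.factorial (m + 1)) * S (n + 1) u - T n (m + 1) u := by
  rw [T, Fin.sum_univ_castSucc]
  have hlast : (-1 : ℝ) ^ (((Fin.last (n+1) : Fin (n+2)) : ℕ) + (n+1)) *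
        (Fin.snoc u x : Fin (n+2) → ℝ) (Fin.last (n+1)) ^
          (n + 1 + 1 - ((Fin.last (n+1) : Fin (n+2)) : ℕ) + m) /
          (Nat.factorial (n + 1 + 1 - ((Fin.last (n+1) : Fin (n+2)) : ℕ) + m)) *
        S ((Fin.last (n+1) : Fin (n+2)) : ℕ)
          (fun j => (Fin.snoc u x : Fin (n+2) → ℝ) (Fin.castLE (Fin.last (n+1)).isLt.le j))
      = x ^ (m + 1) / (Nat.factorial (m + 1)) * S (n + 1) u := by
    have h1 : ((Fin.last (n+1) : Fin (n+2)) : ℕ) = n + 1 := rfl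
    have h2 : n + 1 + 1 - (n + 1) + m = m + 1 := by omega
    have h3 : (-1 : ℝ) ^ ((n + 1) + (n + 1)) = 1 := by
      rw [show (n+1)+(n+1) = 2*(n+1) by ring, pow_mul]; norm_num
    have h4 : (fun j : Fin (n+1) => (Fin.snoc u x : Fin (n+2) → ℝ)
        (Fin.castLE (Fin.last (n+1)).isLt.le j)) = u := by
      funext j
      rw [show Fin.castLE (Fin.last (n+1)).isLt.le j = Fin.castSucc j from rfl,
        Fin.snoc_castSucc]
    show (-1 : ℝ) ^ ((n + 1) + (n + 1)) *
        (Fin.snoc u x : Fin (n+2) → ℝ) (Fin.last (n+1)) ^ (n + 1 + 1 - (n + 1) + m) /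
          (Nat.factorial (n + 1 + 1 - (n + 1) + m)) *
        S (n + 1)
          (fun j => (Fin.snoc u x : Fin (n+2) → ℝ) (Fin.castLE (Fin.last (n+1)).isLt.le j))
      = x ^ (m + 1) / (Nat.factorial (m + 1)) * S (n + 1) u
    rw [h2, h3, h4, Fin.snoc_last]
    ring
  rw [hlast]
  have hsum : ∑ i : Fin (n + 1),
      (-1 : ℝ) ^ (((Fin.castSucc i : Fin (n+2)) : ℕ) + (n+1)) *
        (Fin.snoc u x : Fin (n+2) → ℝ) (Fin.castSucc i) ^
          (n + 1 + 1 - ((Fin.castSucc i : Fin (n+2)) : ℕ) + m) /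
          (Nat.factorial (n + 1 + 1 - ((Fin.castSucc i : Fin (n+2)) : ℕ) + m)) *
        S ((Fin.castSucc i : Fin (n+2)) : ℕ)
          (fun j => (Fin.snoc u x : Fin (n+2) → ℝ) (Fin.castLE (Fin.castSucc i).isLt.le j))
      = - T n (m + 1) u := by
    rw [T, ← Finset.sum_neg_distrib]
    refine Finset.sum_congr rfl fun i _ => ?_
    have h1 : ((Fin.castSucc i : Fin (n+2)) : ℕ) = (i : ℕ) := rfl
    have h2 : n + 1 + 1 - (i : ℕ) + m = (n + 1 - (i : ℕ) + (m + 1)) := by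
      have := i.isLt; omega
    have h3 : (-1 : ℝ) ^ ((i : ℕ) + (n + 1)) = -(-1 : ℝ) ^ ((i : ℕ) + n) := by
      rw [show (i:ℕ) + (n+1) = ((i:ℕ) + n) + 1 by ring, pow_succ]; ring
    have h4 : (fun j : Fin (i : ℕ) => (Fin.snoc u x : Fin (n+2) → ℝ)
          (Fin.castLE (Fin.castSucc i).isLt.le j))
        = (fun j : Fin (i : ℕ) => u (Fin.castLE i.isLt.le j)) := by
      funext j
      exact snoc_castLE u x i.isLt.le j
    show (-1 : ℝ) ^ ((i : ℕ) + (n + 1)) *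
        (Fin.snoc u x : Fin (n+2) → ℝ) (Fin.castSucc i) ^ (n + 1 + 1 - (i : ℕ) + m) /
          (Nat.factorial (n + 1 + 1 - (i : ℕ) + m)) *
        S (i : ℕ)
          (fun j => (Fin.snoc u x : Fin (n+2) → ℝ) (Fin.castLE (Fin.castSucc i).isLt.le j))
      = -((-1 : ℝ) ^ ((i : ℕ) + n) * u i ^ (n + 1 - (i : ℕ) + (m + 1)) /
          (Nat.factorial (n + 1 - (i : ℕ) + (m + 1))) *
          S (i : ℕ) (fun j => u (Fin.castLE i.isLt.le j)))
    rw [h2, h3, h4, Fin.snoc_castSucc]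
    ring
  rw [hsum]
  ring

lemma int_mono (a : ℝ) (q : ℕ) (t : ℝ) :
    (∫ x in (0:ℝ)..t, a * x ^ q) = a * t ^ (q + 1) / ((q : ℝ) + 1) := by
  rw [intervalIntegral.integral_const_mul, integral_pow, zero_pow (Nat.succ_ne_zero _)]
  ring

lemma int_poly1 {N : ℕ} (a : ℝ) (q : ℕ) (d : Fin N → ℝ) (p : Fin N → ℕ) (t : ℝ) :
    (∫ x in (0:ℝ)..t, (a * x ^ q + ∑ j, d j * x ^ p j))
      = a * t ^ (q + 1) / ((q : ℝ) + 1) + ∑ j, d j * t ^ (p j + 1) / ((p j : ℝ) + 1) := by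
  have hmono : ∀ (c : ℝ) (m : ℕ),
      IntervalIntegrable (fun x => c * x ^ m) MeasureTheory.volume 0 t :=
    fun c m => (continuous_const.mul (continuous_pow m)).intervalIntegrable 0 t
  rw [intervalIntegral.integral_add (hmono a q)
      (Continuous.intervalIntegrable (show Continuous (fun x : ℝ => ∑ j, d j * x ^ p j) from
        continuous_finset_sum _ fun j _ =>
        continuous_const.mul (continuous_pow _)) 0 t),
    intervalIntegral.integral_finset_sum (fun j _ => hmono (d j) (p j)), int_mono]
  congr 1
  exact Finset.sum_congr rfl fun j _ => int_mono _ _ _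

lemma int_poly2 {N : ℕ} (a b : ℝ) (q r : ℕ) (d e : Fin N → ℝ) (p s : Fin N → ℕ) (t : ℝ) :
    (∫ x in (0:ℝ)..t, (a * x ^ q + b * x ^ r + ∑ j, (d j * x ^ p j + e j * x ^ s j)))
      = a * t ^ (q + 1) / ((q : ℝ) + 1) + b * t ^ (r + 1) / ((r : ℝ) + 1)
        + ∑ j, (d j * t ^ (p j + 1) / ((p j : ℝ) + 1)
            + e j * t ^ (s j + 1) / ((s j : ℝ) + 1)) := by
  have hmono : ∀ (c : ℝ) (m : ℕ),
      IntervalIntegrable (fun x => c * x ^ m) MeasureTheory.volume 0 t :=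
    fun c m => (continuous_const.mul (continuous_pow m)).intervalIntegrable 0 t
  rw [intervalIntegral.integral_add ((hmono a q).add (hmono b r))
      (Continuous.intervalIntegrable (show Continuous
        (fun x : ℝ => ∑ j, (d j * x ^ p j + e j * x ^ s j)) from
        continuous_finset_sum _ fun j _ =>
        (continuous_const.mul (continuous_pow _)).add
          (continuous_const.mul (continuous_pow _))) 0 t),
    intervalIntegral.integral_add (hmono a q) (hmono b r),
    intervalIntegral.integral_finset_sum (fun j _ => (hmono (d j) (p j)).add (hmono (e j) (s j))),
    int_mono, int_mono]
  congr 1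
  refine Finset.sum_congr rfl fun j _ => ?_
  rw [intervalIntegral.integral_add (hmono (d j) (p j)) (hmono (e j) (s j)), int_mono, int_mono]

lemma main (n : ℕ) : ∀ (N : ℕ) (α : ℝ) (c : Fin N → ℝ) (k : Fin N → ℕ) (t : ℝ),
    iterInt (n + 1) (fun u => α * S (n + 1) u + ∑ j, c j * T n (k j) u) t
      = α * A (n + 1) * t ^ (2 * n + 2) + ∑ j, c j * Bc n (k j) * t ^ (2 * n + 2 + k j) := by
  induction n with
  | zero =>
    intro N α c k t
    calc iterInt 1 (fun u => α * S 1 u + ∑ j, c j * T 0 (k j) u) t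
        = ∫ x in (0:ℝ)..t,
            (α * x ^ 1 + ∑ j, c j / (Nat.factorial (k j + 1)) * x ^ (k j + 1)) := by
          rw [iterInt]
          refine intervalIntegral.integral_congr fun x _ => ?_
          simp only [iterInt, S1_snoc, T0_snoc, pow_one]
          congr 1
          exact Finset.sum_congr rfl fun j _ => by ring
      _ = α * t ^ (1 + 1) / ((1 : ℝ) + 1)
            + ∑ j, c j / (Nat.factorial (k j + 1)) * t ^ (k j + 1 + 1) / ((↑(k j + 1) : ℝ) + 1) := by
          rw [int_poly1]
          norm_num
      _ = α * A 1 * t ^ (2 * 0 + 2) + ∑ j, c j * Bc 0 (k j) * t ^ (2 * 0 + 2 + k j) := by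
          congr 1
          · norm_num [A, Nat.factorial]
            ring
          · refine Finset.sum_congr rfl fun j _ => ?_
            rw [Bc_zero, show 2 * 0 + 2 + k j = k j + 1 + 1 by omega]
            have h1 : ((Nat.factorial (k j + 1) : ℝ)) ≠ 0 :=
              Nat.cast_ne_zero.mpr (Nat.factorial_ne_zero _)
            have h2 : ((k j : ℝ) + 2) ≠ 0 := by positivity
            push_cast
            field_simp
            try ring
            try tauto
  | succ n ih =>
    intro N α c k t
    calc iterInt (n + 1 + 1) (fun u => α * S (n + 1 + 1) u + ∑ j, c j * T (n + 1) (k j) u) t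
        = ∫ x in (0:ℝ)..t,
            (α * A (n + 1) * x ^ (2 * n + 2 + 1) + -α * Bc n 1 * x ^ (2 * n + 2 + 1)
              + ∑ j, (c j * (A (n + 1) / (Nat.factorial (k j + 1))) * x ^ (2 * n + 2 + (k j + 1))
                  + -c j * Bc n (k j + 1) * x ^ (2 * n + 2 + (k j + 1)))) := by
          rw [iterInt]
          refine intervalIntegral.integral_congr fun x _ => ?_
          show iterInt (n + 1) (fun u => α * S (n + 1 + 1) (Fin.snoc u x)
              + ∑ j, c j * T (n + 1) (k j) (Fin.snoc u x)) x = _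
          have h := ih (N + 1)
            (α * x + ∑ j, c j * (x ^ (k j + 1) / (Nat.factorial (k j + 1))))
            (Fin.cons (-α) (fun j => -c j)) (Fin.cons 1 (fun j => k j + 1)) x
          simp only [Fin.sum_univ_succ, Fin.cons_zero, Fin.cons_succ] at h
          have hfun : (fun u => α * S (n + 1 + 1) (Fin.snoc u x)
                + ∑ j, c j * T (n + 1) (k j) (Fin.snoc u x))
              = (fun u : Fin (n + 1) → ℝ =>
                  (α * x + ∑ j, c j * (x ^ (k j + 1) / (Nat.factorial (k j + 1)))) * S (n + 1) u
                  + (-α * T n 1 u + ∑ j, -c j * T n (k j + 1) u)) := by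
            funext u
            rw [S_eq_T (n + 1)]
            simp only [T_snoc, zero_add, pow_one, Nat.factorial_one, Nat.cast_one, div_one]
            simp only [mul_sub, Finset.sum_sub_distrib, add_mul, Finset.sum_mul, neg_mul,
              Finset.sum_neg_distrib, mul_assoc]
            ring
          rw [hfun, h]
          have e1 : (α * x + ∑ j, c j * (x ^ (k j + 1) / (Nat.factorial (k j + 1))))
                * A (n + 1) * x ^ (2 * n + 2)
              = α * A (n + 1) * x ^ (2 * n + 2 + 1)
                + ∑ j, c j * (A (n + 1) / (Nat.factorial (k j + 1))) * x ^ (2 * n + 2 + (k j + 1)) := by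
            rw [add_mul, add_mul, Finset.sum_mul, Finset.sum_mul]
            congr 1
            · rw [pow_succ]; ring
            · refine Finset.sum_congr rfl fun j _ => ?_
              rw [pow_add]; ring
          rw [e1, Finset.sum_add_distrib]
          ring
      _ = α * A (n + 1) * t ^ (2 * n + 2 + 1 + 1) / ((2 * n + 2 + 1 : ℕ) + 1 : ℝ)
            + -α * Bc n 1 * t ^ (2 * n + 2 + 1 + 1) / ((2 * n + 2 + 1 : ℕ) + 1 : ℝ)
            + ∑ j, (c j * (A (n + 1) / (Nat.factorial (k j + 1)))
                  * t ^ (2 * n + 2 + (k j + 1) + 1) / ((2 * n + 2 + (k j + 1) : ℕ) + 1 : ℝ)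
                + -c j * Bc n (k j + 1)
                  * t ^ (2 * n + 2 + (k j + 1) + 1) / ((2 * n + 2 + (k j + 1) : ℕ) + 1 : ℝ)) :=
          int_poly2 _ _ _ _ _ _ _ _ t
      _ = α * A (n + 1 + 1) * t ^ (2 * (n + 1) + 2)
            + ∑ j, c j * Bc (n + 1) (k j) * t ^ (2 * (n + 1) + 2 + k j) := by
          congr 1
          · have hD : ((2 * n + 2 + 1 : ℕ) : ℝ) + 1 = 2 * (n : ℝ) + 4 := by push_cast; ring
            have h4 : (2 * (n : ℝ) + 4) ≠ 0 := by positivity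
            have hp : A (n + 1) = (2 * (n : ℝ) + 4) * A (n + 1 + 1) + Bc n 1 := by
              have h := algA n
              rw [show n + 2 = n + 1 + 1 from rfl] at h
              linarith
            rw [hD, show 2 * n + 2 + 1 + 1 = 2 * (n + 1) + 2 by omega, hp]
            field_simp
            ring
          · refine Finset.sum_congr rfl fun j _ => ?_
            have hDj : ((2 * n + 2 + (k j + 1) : ℕ) : ℝ) + 1
                = 2 * (n : ℝ) + 4 + (k j : ℝ) := by push_cast; ring
            have hj : (2 * (n : ℝ) + 4 + (k j : ℝ)) ≠ 0 := by positivity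
            have hq : A (n + 1) / (Nat.factorial (k j + 1) : ℝ)
                = (2 * (n : ℝ) + 4 + (k j : ℝ)) * Bc (n + 1) (k j) + Bc n (k j + 1) := by
              linarith [algB n (k j)]
            rw [hDj, show 2 * n + 2 + (k j + 1) + 1 = 2 * (n + 1) + 2 + k j by omega, hq]
            field_simp
            ring

end Stmt4Aux

theorem stmt4 (n : ℕ) (hn : 1 ≤ n) (t : ℝ) (ht : t ∈ Set.Icc (0 : ℝ) 1) :
    iterInt n (S n) t = t ^ (2 * n) / (Nat.factorial n * Nat.factorial (n + 1)) := by
  obtain ⟨m, rfl⟩ : ∃ m, n = m + 1 := ⟨n - 1, by omega⟩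
  have hf : (fun u => (1 : ℝ) * S (m + 1) u
      + ∑ j : Fin 0, Fin.elim0 j * Stmt4Aux.T m (Fin.elim0 j) u) = S (m + 1) := by
    funext u
    simp
  rw [← hf, Stmt4Aux.main m 0 1 Fin.elim0 Fin.elim0 t]
  simp only [Finset.univ_eq_empty, Finset.sum_empty, add_zero, one_mul, Stmt4Aux.A]
  rw [show 2 * m + 2 = 2 * (m + 1) by ring]
  ring
end

section
/- Let S_n be the recursively defined functions S_0 = 1, S_n(u) = ∑_{i=1}^n (-1)^{i+n} u_i^{n-i+1}/(n-i+1)! · S_{i-1}(u_1,...,u_{i-1}), and for m ∈ {1,...,n} set S_{n,m}(u) := S_n(u_1,...,u_{n-m},1,...,1). Then the iterated integral ∫_0^1 ∫_0^{u_n} ··· ∫_0^{u_2} S_{n,m}(u) du_1···du_n equals 1/(n!(n+1)!) + (1/(2n)!) ∑_{k=1}^m ((2n-2k)! / ((n-k)!(n+1-k)!)) · C(2k-1, k). -/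
open intervalIntegral

/-- `S_{n,m}(u) = S_n(u_1,…,u_{n-m},1,…,1)`: the last `m` arguments are set to `1`. -/
noncomputable def Snm (n m : ℕ) (u : Fin n → ℝ) : ℝ :=
  S n (fun i => if (i : ℕ) < n - m then u i else 1)


open Finset MvPolynomial



private lemma factR_ne (n : ℕ) : (Nat.factorial n : ℝ) ≠ 0 :=
  Nat.cast_ne_zero.mpr (Nat.factorial_ne_zero n)

private lemma factR_pos (n : ℕ) : (0:ℝ) < (Nat.factorial n : ℝ) := by
  exact_mod_cast Nat.factorial_pos n

/-- partial alternating sum of binomials -/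
private lemma alt (K : ℕ) : ∀ c : ℕ, ∑ a ∈ range (c+1), (-1:ℝ)^a * ((K+1).choose (c-a)) = (K.choose c : ℝ) := by
  intro c
  induction c with
  | zero => simp
  | succ c ih =>
    rw [Finset.sum_range_succ']
    have h1 : ∀ a ∈ range (c+1), (-1:ℝ)^(a+1) * ((K+1).choose (c+1-(a+1)))
        = -((-1:ℝ)^a * ((K+1).choose (c-a))) := by
      intro a _
      have : c+1-(a+1) = c - a := by omega
      rw [this, pow_succ]
      ring
    rw [Finset.sum_congr rfl h1, Finset.sum_neg_distrib, ih]
    have : ((K+1).choose (c+1) : ℝ) = (K.choose c : ℝ) + (K.choose (c+1) : ℝ) := by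
      exact_mod_cast Nat.choose_succ_succ K c
    simp only [Nat.sub_zero, pow_zero, one_mul, this]
    ring

/-- alternating Vandermonde: `∑ (-1)^a C(L+a,a) C(L+1+K, c-a) = C(K,c)` -/
private lemma vand : ∀ L K c : ℕ,
    ∑ a ∈ range (c+1), (-1:ℝ)^a * ((L+a).choose a) * ((L+1+K).choose (c-a)) = (K.choose c : ℝ) := by
  intro L
  induction L with
  | zero =>
    intro K c
    have := alt K c
    rw [← this]
    refine Finset.sum_congr rfl fun a _ => ?_
    simp [Nat.choose_self]
    ring
  | succ L ihL =>
    intro K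
    intro c
    induction c with
    | zero => simp
    | succ c ihc =>
      have split : ∀ a : ℕ, ((L+1+a).choose a : ℝ)
          = ((L+a).choose a : ℝ) + (if a = 0 then 0 else ((L+a).choose (a-1) : ℝ)) := by
        intro a
        cases a with
        | zero => simp
        | succ a =>
          have : L+1+(a+1) = (L+1+a)+1 := by ring
          rw [this, Nat.choose_succ_succ]
          push_cast
          have : L+1+a = L + (a+1) := by ring
          rw [this]
          ring
      calc ∑ a ∈ range (c+1+1), (-1:ℝ)^a * ((L+1+a).choose a) * ((L+1+1+K).choose (c+1-a))
          = ∑ a ∈ range (c+1+1), ((-1:ℝ)^a * ((L+a).choose a) * ((L+(1+(K+1))).choose (c+1-a))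
            + (-1:ℝ)^a * (if a = 0 then 0 else ((L+a).choose (a-1) : ℝ)) * ((L+1+1+K).choose (c+1-a))) := by
            refine Finset.sum_congr rfl fun a _ => ?_
            rw [split a]
            have : L+1+1+K = L+(1+(K+1)) := by ring
            rw [this]
            ring
        _ = (K+1).choose (c+1) + ∑ a ∈ range (c+1+1), (-1:ℝ)^a * (if a = 0 then 0 else ((L+a).choose (a-1) : ℝ)) * ((L+1+1+K).choose (c+1-a)) := by
            rw [Finset.sum_add_distrib]
            congr 1
            have : L+(1+(K+1)) = L+1+(K+1) := by ring
            rw [this]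
            exact_mod_cast ihL (K+1) (c+1)
        _ = (K+1).choose (c+1) - ∑ a ∈ range (c+1), (-1:ℝ)^a * ((L+1+a).choose a) * ((L+1+1+K).choose (c-a)) := by
            congr 1
            rw [Finset.sum_range_succ']
            simp only [if_pos rfl]
            have h2 : ∀ a ∈ range (c+1), (-1:ℝ)^(a+1) * (if a+1 = 0 then 0 else ((L+(a+1)).choose (a+1-1) : ℝ)) * ((L+1+1+K).choose (c+1-(a+1)))
                = -((-1:ℝ)^a * ((L+1+a).choose a) * ((L+1+1+K).choose (c-a))) := by
              intro a _
              have e1 : a+1 ≠ 0 := by omega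
              have e2 : a+1-1 = a := by omega
              have e3 : c+1-(a+1) = c-a := by omega
              have e4 : L+(a+1) = L+1+a := by ring
              rw [if_neg e1, e2, e3, e4, pow_succ]
              ring
            rw [Finset.sum_congr rfl h2, Finset.sum_neg_distrib]
            simp
        _ = (K.choose (c+1) : ℝ) := by
            rw [ihc]
            have : ((K+1).choose (c+1) : ℝ) = (K.choose c : ℝ) + (K.choose (c+1) : ℝ) := by
              exact_mod_cast Nat.choose_succ_succ K c
            rw [this]
            ring




/-- `ER N i = (N+i)!/(i!(i+1)!(N-i)!)`, i.e. `Cat_i * C(N+i, 2i)`. -/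
noncomputable def ER (N i : ℕ) : ℝ :=
  (Nat.factorial (N+i) : ℝ) / (Nat.factorial i * Nat.factorial (i+1) * Nat.factorial (N-i))

private lemma key1 (j L : ℕ) :
    ((Nat.factorial (2*j+L+4) : ℝ))/((Nat.factorial (j+1)) * (Nat.factorial (j+2)) * (Nat.factorial L) * ((j+L+2)*(j+L+3)))
      + ((Nat.factorial (2*j+L+3) : ℝ))/((Nat.factorial j) * (Nat.factorial (j+1)) * (Nat.factorial (L+1)) * ((j+L+2)*(j+L+3)))
      = ((Nat.factorial (2*j+L+3) : ℝ))/((Nat.factorial (j+1)) * (Nat.factorial (j+2)) * (Nat.factorial (L+1))) := by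
  have f1 : 2*j+L+4 = (2*j+L+3)+1 := by ring
  have f2 : j+2 = (j+1)+1 := rfl
  rw [f1, f2, Nat.factorial_succ (2*j+L+3), Nat.factorial_succ (j+1), Nat.factorial_succ j,
    Nat.factorial_succ L]
  have h1 := factR_ne (2*j+L+3)
  have h2 := factR_ne j
  have h3 := factR_ne L
  have h4 : ((j:ℝ)+1) ≠ 0 := by positivity
  have h5 : ((j:ℝ)+1+1) ≠ 0 := by positivity
  have h6 : ((L:ℝ)+1) ≠ 0 := by positivity
  have h7 : ((j:ℝ)+(L:ℝ)+2) ≠ 0 := by positivity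
  have h8 : ((j:ℝ)+(L:ℝ)+3) ≠ 0 := by positivity
  push_cast
  field_simp
  ring

/-- The key alternating Catalan identity. -/
private lemma Dstar (N : ℕ) :
    ∑ i ∈ range (N+1), (-1:ℝ)^i * ER N i = if N = 0 then 1 else 0 := by
  rcases N with _ | M
  · simp [ER]
  · have ps : ∀ j, j ≤ M → ∑ i ∈ range (j+1), (-1:ℝ)^i * ER (M+1) i
        = (-1:ℝ)^j * ((Nat.factorial (M+j+2) : ℝ) /
            (Nat.factorial j * Nat.factorial (j+1) * Nat.factorial (M-j) * ((M+1)*(M+2)))) := by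
      intro j
      induction j with
      | zero =>
        intro _
        rw [Finset.sum_range_one]
        simp only [pow_zero, one_mul, ER]
        have e1 : M+1+0 = M+1 := rfl
        have e2 : M+1-0 = M+1 := rfl
        have e3 : M+0+2 = M+2 := rfl
        have e4 : M-0 = M := rfl
        rw [e1, e2, e3, e4]
        rw [show Nat.factorial (M+2) = (M+2)*(M+1)*Nat.factorial M by
          rw [show M+2 = (M+1)+1 from rfl, Nat.factorial_succ, Nat.factorial_succ]; ring]
        rw [show Nat.factorial (M+1) = (M+1)*Nat.factorial M from Nat.factorial_succ M]
        have h1 := factR_ne M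
        have h2 : ((M:ℝ)+1) ≠ 0 := by positivity
        have h3 : ((M:ℝ)+2) ≠ 0 := by positivity
        push_cast
        field_simp
      | succ j ih =>
        intro hj
        have hjM : j ≤ M := by omega
        rw [Finset.sum_range_succ, ih hjM]
        obtain ⟨L, rfl⟩ : ∃ L, M = j+1+L := ⟨M-j-1, by omega⟩
        have eER : ER (j+1+L+1) (j+1) = (Nat.factorial (2*j+L+3) : ℝ) /
            (Nat.factorial (j+1) * Nat.factorial (j+2) * Nat.factorial (L+1)) := by
          unfold ER
          rw [show j+1+L+1+(j+1) = 2*j+L+3 by ring, show j+1+1 = j+2 from rfl,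
            show j+1+L+1-(j+1) = L+1 by omega]
        have eA1 : j+1+L+(j+1)+2 = 2*j+L+4 := by omega
        have eA0 : j+1+L+j+2 = 2*j+L+3 := by omega
        have eS0 : j+1+L-j = L+1 := by omega
        have eS1 : j+1+L-(j+1) = L := by omega
        rw [eER, eA1, eA0, eS0, eS1]
        have hk := key1 j L
        push_cast
        push_cast at hk
        rw [pow_succ]
        linear_combination ((-1:ℝ)^j) * hk
    have hM := ps M (le_refl M)
    rw [Finset.sum_range_succ, hM]
    have eER : ER (M+1) (M+1) = (Nat.factorial (2*M+2) : ℝ) /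
        (Nat.factorial (M+1) * Nat.factorial (M+2)) := by
      unfold ER
      rw [show M+1+(M+1) = 2*M+2 by ring, show M+1+1 = M+2 from rfl,
        show M+1-(M+1) = 0 by omega]
      simp [Nat.factorial]
    have eA : M+M+2 = 2*M+2 := by omega
    rw [eER, eA, show M-M = 0 by omega]
    simp only [Nat.factorial_zero]
    rw [show Nat.factorial (M+2) = (M+2)*Nat.factorial (M+1) from Nat.factorial_succ (M+1),
      show Nat.factorial (M+1) = (M+1)*Nat.factorial M from Nat.factorial_succ M]
    have h1 := factR_ne M
    have h2 : ((M:ℝ)+1) ≠ 0 := by positivity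
    have h3 : ((M:ℝ)+2) ≠ 0 := by positivity
    have : (if M+1 = 0 then (1:ℝ) else 0) = 0 := by simp
    rw [this, pow_succ]
    push_cast
    field_simp
    ring




def ppsum {n : ℕ} (E : Fin n → ℕ) (j : Fin n) : ℕ := ∑ j' : Fin n, if j' ≤ j then E j' else 0

def sdegg {n : ℕ} (E : Fin n → ℕ) : ℕ := ∑ j, E j

noncomputable def Wcf (n : ℕ) (E : Fin n → ℕ) : ℝ :=
  ∏ j : Fin n, (1:ℝ)/((ppsum E j + (j:ℕ) + 1 : ℕ) : ℝ)

lemma psum_castSucc {n : ℕ} (E : Fin (n+1) → ℕ) (j : Fin n) :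
    ppsum E j.castSucc = ppsum (fun j' => E j'.castSucc) j := by
  unfold ppsum
  rw [Fin.sum_univ_castSucc]
  have hlast : (if Fin.last n ≤ j.castSucc then E (Fin.last n) else 0) = 0 := by
    rw [if_neg]
    exact not_le.mpr (Fin.castSucc_lt_last j)
  rw [hlast, add_zero]
  refine Finset.sum_congr rfl fun j' _ => ?_
  simp [Fin.castSucc_le_castSucc_iff]

lemma psum_last {n : ℕ} (E : Fin (n+1) → ℕ) : ppsum E (Fin.last n) = sdegg E := by
  unfold ppsum sdegg
  refine Finset.sum_congr rfl fun j' _ => ?_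
  rw [if_pos (Fin.le_last j')]

lemma sdeg_split {n : ℕ} (E : Fin (n+1) → ℕ) :
    sdegg E = sdegg (fun j' : Fin n => E j'.castSucc) + E (Fin.last n) := by
  unfold sdegg
  rw [Fin.sum_univ_castSucc]

theorem master : ∀ (n : ℕ) {ι : Type} (s : Finset ι) (c : ι → ℝ) (E : ι → Fin n → ℕ) (t : ℝ),
    iterInt n (fun u => ∑ i ∈ s, c i * ∏ j, u j ^ E i j) t
      = ∑ i ∈ s, c i * (Wcf n (E i) * t ^ (sdegg (E i) + n)) := by
  intro n
  induction n with
  | zero =>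
    intro ι s c E t
    show (∑ i ∈ s, c i * ∏ j : Fin 0, _) = _
    refine Finset.sum_congr rfl fun i _ => ?_
    simp [Wcf, sdegg]
  | succ n ih =>
    intro ι s c E t
    rw [iterInt]
    have hstep : ∀ x : ℝ, iterInt n
        (fun u => ∑ i ∈ s, c i * ∏ j : Fin (n+1), (Fin.snoc u x : Fin (n+1) → ℝ) j ^ E i j) x
        = ∑ i ∈ s, (c i * Wcf n (fun j : Fin n => E i j.castSucc))
            * x ^ (E i (Fin.last n) + (sdegg (fun j : Fin n => E i j.castSucc) + n)) := by
      intro x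
      have hfun : (fun u : Fin n → ℝ => ∑ i ∈ s, c i * ∏ j : Fin (n+1), (Fin.snoc u x : Fin (n+1) → ℝ) j ^ E i j)
          = fun u : Fin n → ℝ => ∑ i ∈ s, (c i * x ^ E i (Fin.last n)) * ∏ j : Fin n, u j ^ E i j.castSucc := by
        funext u
        refine Finset.sum_congr rfl fun i _ => ?_
        rw [Fin.prod_univ_castSucc]
        simp only [Fin.snoc_castSucc, Fin.snoc_last]
        ring
      rw [hfun, ih s (fun i => c i * x ^ E i (Fin.last n)) (fun i (j : Fin n) => E i j.castSucc) x]
      refine Finset.sum_congr rfl fun i _ => ?_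
      rw [pow_add]
      ring
    rw [intervalIntegral.integral_congr (g := fun x => ∑ i ∈ s,
      (c i * Wcf n (fun j : Fin n => E i j.castSucc))
        * x ^ (E i (Fin.last n) + (sdegg (fun j : Fin n => E i j.castSucc) + n)))
      (fun x _ => hstep x)]
    rw [intervalIntegral.integral_finset_sum (fun i _ =>
      (by apply Continuous.intervalIntegrable; fun_prop))]
    refine Finset.sum_congr rfl fun i _ => ?_
    rw [intervalIntegral.integral_const_mul, integral_pow]
    have e1 : sdegg (E i) + (n+1) = (E i (Fin.last n) + (sdegg (fun j : Fin n => E i j.castSucc) + n)) + 1 := by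
      rw [sdeg_split (E i)]; ring
    have e2 : Wcf (n+1) (E i) = Wcf n (fun j : Fin n => E i j.castSucc)
        * (1 / ((sdegg (E i) + (n+1) : ℕ) : ℝ)) := by
      unfold Wcf
      rw [Fin.prod_univ_castSucc]
      congr 1
      · refine Finset.prod_congr rfl fun j _ => ?_
        rw [psum_castSucc]
        simp
      · rw [psum_last, Fin.val_last]
        congr 1
    rw [e2, e1]
    have : ((0:ℝ)) ^ ((E i (Fin.last n) + (sdegg (fun j : Fin n => E i j.castSucc) + n)) + 1) = 0 := by
      exact zero_pow (Nat.succ_ne_zero _)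
    rw [this]
    push_cast
    ring


/-! ### Bridge: iterated integrals of polynomial integrands -/

noncomputable def iI (n : ℕ) (p : MvPolynomial (Fin n) ℝ) (t : ℝ) : ℝ :=
  iterInt n (fun u => MvPolynomial.eval u p) t

lemma iI_superset {n : ℕ} (p : MvPolynomial (Fin n) ℝ) {s : Finset (Fin n →₀ ℕ)}
    (hs : p.support ⊆ s) (t : ℝ) :
    iI n p t = ∑ m ∈ s, MvPolynomial.coeff m p * (Wcf n ⇑m * t ^ (sdegg ⇑m + n)) := by
  have h1 : (fun u : Fin n → ℝ => MvPolynomial.eval u p)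
      = fun u => ∑ m ∈ s, MvPolynomial.coeff m p * ∏ j, u j ^ m j := by
    funext u
    rw [MvPolynomial.eval_eq']
    refine Finset.sum_subset hs fun m _ hm => ?_
    rw [MvPolynomial.notMem_support_iff.mp hm, zero_mul]
  unfold iI
  rw [h1, master]

lemma iI_rep {n : ℕ} (p : MvPolynomial (Fin n) ℝ) (t : ℝ) :
    iI n p t = ∑ m ∈ p.support, MvPolynomial.coeff m p * (Wcf n ⇑m * t ^ (sdegg ⇑m + n)) :=
  iI_superset p (subset_refl _) t

lemma iI_add {n : ℕ} (p q : MvPolynomial (Fin n) ℝ) (t : ℝ) :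
    iI n (p + q) t = iI n p t + iI n q t := by
  have hp : p.support ⊆ p.support ∪ q.support := Finset.subset_union_left
  have hq : q.support ⊆ p.support ∪ q.support := Finset.subset_union_right
  have hpq : (p+q).support ⊆ p.support ∪ q.support := MvPolynomial.support_add
  rw [iI_superset p hp t, iI_superset q hq t, iI_superset (p+q) hpq t, ← Finset.sum_add_distrib]
  refine Finset.sum_congr rfl fun m _ => ?_
  rw [MvPolynomial.coeff_add]
  ring

lemma iI_smul {n : ℕ} (c : ℝ) (p : MvPolynomial (Fin n) ℝ) (t : ℝ) :
    iI n (c • p) t = c * iI n p t := by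
  have hs : (c • p).support ⊆ p.support := Finsupp.support_smul
  rw [iI_superset (c • p) hs t, iI_rep p t, Finset.mul_sum]
  refine Finset.sum_congr rfl fun m _ => ?_
  rw [MvPolynomial.coeff_smul]
  simp only [smul_eq_mul]
  ring

lemma iI_Cmul {n : ℕ} (c : ℝ) (p : MvPolynomial (Fin n) ℝ) (t : ℝ) :
    iI n (MvPolynomial.C c * p) t = c * iI n p t := by
  rw [← MvPolynomial.smul_eq_C_mul, iI_smul]

lemma iI_zero {n : ℕ} (t : ℝ) : iI n (0 : MvPolynomial (Fin n) ℝ) t = 0 := by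
  rw [iI_rep]
  simp

lemma iI_sum {n : ℕ} {ι : Type*} (s : Finset ι) (f : ι → MvPolynomial (Fin n) ℝ) (t : ℝ) :
    iI n (∑ i ∈ s, f i) t = ∑ i ∈ s, iI n (f i) t := by
  classical
  induction s using Finset.induction_on with
  | empty => simp [iI_zero]
  | insert x s hx ih =>
    rw [Finset.sum_insert hx, Finset.sum_insert hx, iI_add, ih]

/-- peeling a dummy (absent) outer variable -/
lemma iI_peel_dummy {n : ℕ} (q : MvPolynomial (Fin n) ℝ) (t : ℝ) :
    iI (n+1) (MvPolynomial.rename Fin.castSucc q) t = ∫ x in (0:ℝ)..t, iI n q x := by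
  unfold iI
  rw [iterInt]
  refine intervalIntegral.integral_congr fun x _ => ?_
  congr 1
  funext u
  have hcomp : (Fin.snoc u x : Fin (n+1) → ℝ) ∘ Fin.castSucc = u := by
    funext j
    simp [Fin.snoc_castSucc]
  rw [MvPolynomial.eval_rename, hcomp]

/-- peeling the outer variable from a monomial factor -/
lemma iI_peel_mono {n : ℕ} (q : MvPolynomial (Fin n) ℝ) (e : ℕ) (t : ℝ) :
    iI (n+1) (MvPolynomial.rename Fin.castSucc q * MvPolynomial.X (Fin.last n) ^ e) t
      = ∫ x in (0:ℝ)..t, x ^ e * iI n q x := by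
  unfold iI
  rw [iterInt]
  refine intervalIntegral.integral_congr fun x _ => ?_
  have hfun : (fun u : Fin n → ℝ => MvPolynomial.eval (Fin.snoc u x)
        (MvPolynomial.rename Fin.castSucc q * MvPolynomial.X (Fin.last n) ^ e))
      = fun u => MvPolynomial.eval u (MvPolynomial.C (x^e) * q) := by
    funext u
    have hcomp : (Fin.snoc u x : Fin (n+1) → ℝ) ∘ Fin.castSucc = u := by
      funext j
      simp [Fin.snoc_castSucc]
    rw [MvPolynomial.eval_mul, MvPolynomial.eval_pow, MvPolynomial.eval_X,
      MvPolynomial.eval_rename, hcomp, Fin.snoc_last, MvPolynomial.eval_mul,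
      MvPolynomial.eval_C]
    ring
  show iterInt n (fun u : Fin n → ℝ => MvPolynomial.eval (Fin.snoc u x)
        (MvPolynomial.rename Fin.castSucc q * MvPolynomial.X (Fin.last n) ^ e)) x = _
  rw [hfun]
  exact iI_Cmul (x^e) q x

/-- main monomial-times-prefix computation -/
lemma MP : ∀ (k i p e : ℕ), p = i+1+k → ∀ (r : MvPolynomial (Fin i) ℝ) (c : ℝ) (d : ℕ),
    (∀ x : ℝ, iI i r x = c * x ^ d) → ∀ (hip : i < p) (t : ℝ),
    iI p (MvPolynomial.rename (Fin.castLE hip.le) r * MvPolynomial.X (⟨i, hip⟩ : Fin p) ^ e) t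
      = (c * ((d+e).factorial : ℝ) / ((d+e+1+k).factorial : ℝ)) * t ^ (d+e+1+k) := by
  intro k
  induction k with
  | zero =>
    intro i p e hp r c d H hip t
    subst hp
    have heq : (MvPolynomial.rename (Fin.castLE hip.le) r
          * MvPolynomial.X (⟨i, hip⟩ : Fin (i+1+0)) ^ e)
        = MvPolynomial.rename Fin.castSucc r * MvPolynomial.X (Fin.last i) ^ e := rfl
    rw [heq, iI_peel_mono]
    have h2 : ∀ x ∈ Set.uIcc (0:ℝ) t, x ^ e * iI i r x = c * x ^ (d+e) := by
      intro x _
      rw [H x, pow_add]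
      ring
    rw [intervalIntegral.integral_congr h2, intervalIntegral.integral_const_mul,
      integral_pow]
    have hne : ((d:ℝ)+e+1) ≠ 0 := by positivity
    have hfact : ((d+e+1+0).factorial : ℝ) = ((d:ℝ)+e+1) * ((d+e).factorial : ℝ) := by
      have : d+e+1+0 = (d+e)+1 := rfl
      rw [this, Nat.factorial_succ]
      push_cast
      ring
    rw [hfact]
    have h0 : ((0:ℝ)) ^ (d+e+1) = 0 := zero_pow (Nat.succ_ne_zero _)
    rw [h0]
    have := factR_ne (d+e)
    field_simp
    push_cast; ring
  | succ k ihk =>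
    intro i p e hp r c d H hip t
    subst hp
    have h2 : i < i+1+k := by omega
    have heq : (MvPolynomial.rename (Fin.castLE hip.le) r
          * MvPolynomial.X (⟨i, hip⟩ : Fin (i+1+(k+1))) ^ e)
        = MvPolynomial.rename Fin.castSucc
            (MvPolynomial.rename (Fin.castLE h2.le) r
              * MvPolynomial.X (⟨i, h2⟩ : Fin (i+1+k)) ^ e) := by
      rw [map_mul, map_pow, MvPolynomial.rename_rename, MvPolynomial.rename_X]
      rfl
    rw [heq]
    show iI ((i+1+k)+1) (MvPolynomial.rename Fin.castSucc
        (MvPolynomial.rename (Fin.castLE h2.le) r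
          * MvPolynomial.X (⟨i, h2⟩ : Fin (i+1+k)) ^ e)) t = _
    rw [iI_peel_dummy]
    have h3 : ∀ x ∈ Set.uIcc (0:ℝ) t,
        iI (i+1+k) (MvPolynomial.rename (Fin.castLE h2.le) r
          * MvPolynomial.X (⟨i, h2⟩ : Fin (i+1+k)) ^ e) x
        = (c * ((d+e).factorial : ℝ) / ((d+e+1+k).factorial : ℝ)) * x ^ (d+e+1+k) := by
      intro x _
      exact ihk i (i+1+k) e rfl r c d H h2 x
    rw [intervalIntegral.integral_congr h3, intervalIntegral.integral_const_mul, integral_pow]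
    have h0 : ((0:ℝ)) ^ (d+e+1+k+1) = 0 := zero_pow (Nat.succ_ne_zero _)
    rw [h0]
    have hfact : ((d+e+1+(k+1)).factorial : ℝ)
        = ((d:ℝ)+e+1+k+1) * ((d+e+1+k).factorial : ℝ) := by
      have : d+e+1+(k+1) = (d+e+1+k)+1 := rfl
      rw [this, Nat.factorial_succ]
      push_cast
      ring
    rw [hfact]
    have := factR_ne (d+e)
    have := factR_ne (d+e+1+k)
    have hne : ((d:ℝ)+e+1+k+1) ≠ 0 := by positivity
    field_simp
    push_cast; ring

/-! ### The polynomial representation of `S` -/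

noncomputable def SP : ∀ n : ℕ, MvPolynomial (Fin n) ℝ
  | 0 => 1
  | (n + 1) => ∑ i : Fin (n + 1),
      MvPolynomial.C ((-1 : ℝ) ^ ((i : ℕ) + n) / (Nat.factorial (n + 1 - (i : ℕ)))) *
        (MvPolynomial.rename (Fin.castLE i.isLt.le) (SP i)
          * MvPolynomial.X i ^ (n + 1 - (i : ℕ)))

lemma S_eq : ∀ n : ℕ, ∀ u : Fin n → ℝ, S n u = MvPolynomial.eval u (SP n) := by
  intro n
  induction n using Nat.strong_induction_on with
  | _ n ih =>
    match n with
    | 0 =>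
      intro u
      simp [S, SP]
    | (m+1) =>
      intro u
      rw [S, SP, map_sum]
      refine Finset.sum_congr rfl fun i _ => ?_
      rw [MvPolynomial.eval_mul, MvPolynomial.eval_C, MvPolynomial.eval_mul,
        MvPolynomial.eval_pow, MvPolynomial.eval_X, MvPolynomial.eval_rename,
        ← ih i i.isLt]
      have hco : (u ∘ Fin.castLE i.isLt.le) = fun j => u (Fin.castLE i.isLt.le j) := rfl
      rw [hco]
      ring

/-- consequence of the alternating Catalan identity -/
lemma Dsum (n : ℕ) : ∑ i ∈ range (n+1), (-1:ℝ)^(i+n) * ER (n+1) i = ER (n+1) (n+1) := by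
  have h := Dstar (n+1)
  rw [if_neg (Nat.succ_ne_zero n), Finset.sum_range_succ] at h
  have h2 : ∑ i ∈ range (n+1), (-1:ℝ)^(i+n) * ER (n+1) i
      = (-1:ℝ)^n * ∑ i ∈ range (n+1), (-1:ℝ)^i * ER (n+1) i := by
    rw [Finset.mul_sum]
    refine Finset.sum_congr rfl fun i _ => ?_
    rw [pow_add]
    ring
  have h3 : ∑ i ∈ range (n+1), (-1:ℝ)^i * ER (n+1) i = -((-1:ℝ)^(n+1) * ER (n+1) (n+1)) := by
    linarith
  rw [h2, h3]
  have hps : ((-1:ℝ))^n * ((-1:ℝ))^(n+1) = -1 := by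
    rw [← pow_add, show n+(n+1) = 2*n+1 by ring, pow_succ, pow_mul]
    norm_num
  calc (-1:ℝ)^n * -((-1:ℝ)^(n+1) * ER (n+1) (n+1))
      = -((-1:ℝ)^n * (-1:ℝ)^(n+1)) * ER (n+1) (n+1) := by ring
    _ = ER (n+1) (n+1) := by rw [hps]; ring

/-- Lemma 1: the full simplex integral of `S_p`. -/
lemma L1 : ∀ p : ℕ, ∀ t : ℝ, iI p (SP p) t
    = (1/((Nat.factorial p : ℝ) * (Nat.factorial (p+1) : ℝ))) * t^(2*p) := by
  intro p
  induction p using Nat.strong_induction_on with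
  | _ p ih =>
    match p with
    | 0 =>
      intro t
      show MvPolynomial.eval _ (SP 0) = _
      simp [SP]
    | (n+1) =>
      intro t
      rw [SP, iI_sum]
      have hterm : ∀ i : Fin (n+1),
          iI (n+1) (MvPolynomial.C ((-1 : ℝ) ^ ((i : ℕ) + n) / (Nat.factorial (n + 1 - (i : ℕ)))) *
            (MvPolynomial.rename (Fin.castLE i.isLt.le) (SP i)
              * MvPolynomial.X i ^ (n + 1 - (i : ℕ)))) t
          = ((-1:ℝ)^((i:ℕ)+n) * ER (n+1) (i:ℕ) / ((Nat.factorial (2*(n+1)) : ℝ)))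
              * t^(2*(n+1)) := by
        intro i
        rw [iI_Cmul]
        have hip : (i:ℕ) < n+1 := i.isLt
        have hMP := MP (n - (i:ℕ)) (i:ℕ) (n+1) (n+1-(i:ℕ)) (by omega) (SP (i:ℕ))
          (1/((Nat.factorial (i:ℕ) : ℝ) * (Nat.factorial ((i:ℕ)+1) : ℝ))) (2*(i:ℕ))
          (ih (i:ℕ) hip) hip t
        have hX : (⟨(i:ℕ), hip⟩ : Fin (n+1)) = i := rfl
        rw [hX] at hMP
        have e1 : 2*(i:ℕ)+(n+1-(i:ℕ))+1+(n-(i:ℕ)) = 2*(n+1) := by omega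
        have e2 : 2*(i:ℕ)+(n+1-(i:ℕ)) = n+1+(i:ℕ) := by omega
        rw [e1, e2] at hMP
        rw [hMP]
        unfold ER
        have e3 : n+1-(i:ℕ)+1 = n+2-(i:ℕ) := by omega
        have hne1 := factR_ne (n+1-(i:ℕ))
        have hne2 := factR_ne (i:ℕ)
        have hne3 := factR_ne ((i:ℕ)+1)
        have hne4 := factR_ne (2*(n+1))
        have hne5 := factR_ne (n+1+(i:ℕ))
        field_simp
      rw [Finset.sum_congr rfl (fun i _ => hterm i)]
      rw [Fin.sum_univ_eq_sum_range (fun i =>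
        ((-1:ℝ)^(i+n) * ER (n+1) i / ((Nat.factorial (2*(n+1)) : ℝ))) * t^(2*(n+1)))]
      rw [← Finset.sum_mul, ← Finset.sum_div, Dsum]
      unfold ER
      rw [show n+1+(n+1) = 2*(n+1) by omega, show n+1-(n+1) = 0 by omega,
        show (n+1)+1 = n+2 from rfl]
      simp only [Nat.factorial_zero, Nat.cast_one, mul_one]
      have hne1 := factR_ne (n+1)
      have hne2 := factR_ne (n+2)
      have hne3 := factR_ne (2*(n+1))
      field_simp

/-! ### S with trailing ones substituted -/

private lemma powpar {a b : ℕ} (h : a % 2 = b % 2) : (-1:ℝ)^a = (-1)^b := by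
  conv_lhs => rw [← Nat.div_add_mod a 2]
  conv_rhs => rw [← Nat.div_add_mod b 2]
  rw [pow_add, pow_add, pow_mul, pow_mul, h]
  norm_num

private lemma binalt (M : ℕ) (hM : 1 ≤ M) :
    ∑ s ∈ range M, (-1:ℝ)^(M+1+s) * (M.choose s : ℝ) = 1 := by
  obtain ⟨K, rfl⟩ : ∃ K, M = K+1 := ⟨M-1, by omega⟩
  rw [← Finset.sum_range_reflect]
  have hterm : ∀ j ∈ range (K+1), (-1:ℝ)^(K+1+1+(K+1-1-j)) * ((K+1).choose (K+1-1-j) : ℝ)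
      = (-1:ℝ)^j * ((K+1).choose (K-j) : ℝ) := by
    intro j hj
    simp only [mem_range] at hj
    rw [show K+1-1-j = K-j by omega, powpar (a := K+1+1+(K-j)) (b := j) (by omega)]
  rw [Finset.sum_congr rfl hterm]
  have h := alt K K
  rw [Nat.choose_self, Nat.cast_one] at h
  exact h

private lemma binaltf (M : ℕ) (hM : 1 ≤ M) :
    ∑ s ∈ range M, (-1:ℝ)^(M+1+s) / ((Nat.factorial (M-s) : ℝ) * (Nat.factorial s : ℝ))
      = 1/(Nat.factorial M : ℝ) := by
  have h := binalt M hM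
  have hterm : ∀ s ∈ range M, (-1:ℝ)^(M+1+s) / ((Nat.factorial (M-s) : ℝ) * (Nat.factorial s : ℝ))
      = (-1:ℝ)^(M+1+s) * (M.choose s : ℝ) / (Nat.factorial M : ℝ) := by
    intro s hs
    simp only [mem_range] at hs
    have hc : (M.choose s) * (Nat.factorial s) * (Nat.factorial (M-s)) = Nat.factorial M :=
      Nat.choose_mul_factorial_mul_factorial hs.le
    have hcR : (M.choose s : ℝ) * (Nat.factorial s : ℝ) * (Nat.factorial (M-s) : ℝ)
        = (Nat.factorial M : ℝ) := by exact_mod_cast hc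
    have h1 := factR_ne s
    have h2 := factR_ne (M-s)
    have h3 := factR_ne M
    have hch : (M.choose s : ℝ) = (Nat.factorial M : ℝ) / ((Nat.factorial s : ℝ) * (Nat.factorial (M-s) : ℝ)) := by
      rw [eq_div_iff (mul_ne_zero h1 h2)]
      linear_combination hcR
    rw [hch]
    field_simp
  rw [Finset.sum_congr rfl hterm]
  have : ∑ s ∈ range M, (-1:ℝ)^(M+1+s) * (M.choose s : ℝ) / (Nat.factorial M : ℝ)
      = (∑ s ∈ range M, (-1:ℝ)^(M+1+s) * (M.choose s : ℝ)) / (Nat.factorial M : ℝ) := by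
    rw [Finset.sum_div]
  rw [this, h]

noncomputable def SPO (p N : ℕ) : MvPolynomial (Fin p) ℝ :=
  MvPolynomial.aeval
    (fun j : Fin N => if h : (j:ℕ) < p then MvPolynomial.X (⟨(j:ℕ), h⟩ : Fin p) else 1) (SP N)

lemma SPO_self (p : ℕ) : SPO p p = SP p := by
  unfold SPO
  have hσ : (fun j : Fin p => if h : (j:ℕ) < p then MvPolynomial.X (⟨(j:ℕ), h⟩ : Fin p) else 1)
      = (MvPolynomial.X : Fin p → MvPolynomial (Fin p) ℝ) := by
    funext j
    rw [dif_pos j.isLt]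
  rw [hσ]
  exact MvPolynomial.aeval_X_left_apply _

lemma SPO_succ (p N : ℕ) : SPO p (N+1)
    = ∑ i : Fin (N+1), MvPolynomial.C ((-1:ℝ)^((i:ℕ)+N) / (Nat.factorial (N+1-(i:ℕ)))) *
      (if h : (i:ℕ) < p then
          MvPolynomial.rename (Fin.castLE h.le) (SP (i:ℕ))
            * MvPolynomial.X (⟨(i:ℕ), h⟩ : Fin p) ^ (N+1-(i:ℕ))
        else SPO p (i:ℕ)) := by
  unfold SPO
  rw [SP, map_sum]
  refine Finset.sum_congr rfl fun i _ => ?_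
  rw [map_mul, map_mul, map_pow, MvPolynomial.aeval_C, MvPolynomial.aeval_X,
    MvPolynomial.aeval_rename, MvPolynomial.algebraMap_eq]
  by_cases h : (i:ℕ) < p
  · rw [dif_pos h, dif_pos h]
    congr 1
    have hcomp : ((fun j : Fin (N+1) => if h : (j:ℕ) < p then (MvPolynomial.X (⟨(j:ℕ), h⟩ : Fin p) : MvPolynomial (Fin p) ℝ) else 1)
          ∘ Fin.castLE i.isLt.le)
        = fun j : Fin (i:ℕ) => (MvPolynomial.X (Fin.castLE h.le j) : MvPolynomial (Fin p) ℝ) := by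
      funext j
      have hjp : ((Fin.castLE i.isLt.le j : Fin (N+1)) : ℕ) < p := lt_of_lt_of_le j.isLt h.le
      simp only [Function.comp_apply, dif_pos hjp]
      rfl
    rw [hcomp]
    rw [MvPolynomial.rename_eq_aeval]; rfl
  · rw [dif_neg h, dif_neg h, one_pow, mul_one]
    have hcomp : ((fun j : Fin (N+1) => if h : (j:ℕ) < p then (MvPolynomial.X (⟨(j:ℕ), h⟩ : Fin p) : MvPolynomial (Fin p) ℝ) else 1)
          ∘ Fin.castLE i.isLt.le)
        = fun j : Fin (i:ℕ) => if h : (j:ℕ) < p then (MvPolynomial.X (⟨(j:ℕ), h⟩ : Fin p) : MvPolynomial (Fin p) ℝ) else 1 := by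
      funext j
      rfl
    rw [hcomp]

/-- the coefficients in the Φ formula -/
noncomputable def dd (p r : ℕ) : ℝ :=
  if r = 0 then 1/((Nat.factorial p : ℝ) * (Nat.factorial (p+1) : ℝ))
  else (∑ i ∈ range p, (-1:ℝ)^(i+p+1) * ER (p+r) i) / (Nat.factorial (2*p+r) : ℝ)

lemma Phi (p : ℕ) : ∀ q, ∀ t : ℝ, iI p (SPO p (p+q)) t
    = ∑ r ∈ range (q+1), (-1:ℝ)^r * dd p r * t^(2*p+r) / (Nat.factorial (q-r) : ℝ) := by
  intro q
  induction q using Nat.strong_induction_on with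
  | _ q ihq =>
    match q with
    | 0 =>
      intro t
      rw [show p + 0 = p from rfl, SPO_self, L1, Finset.sum_range_one]
      simp [dd]
    | (Q+1) =>
      intro t
      rw [show p+(Q+1) = (p+Q)+1 from rfl, SPO_succ, iI_sum]
      set g : ℕ → ℝ := fun i => iI p
        (MvPolynomial.C ((-1:ℝ)^(i+(p+Q)) / (Nat.factorial (p+Q+1-i))) *
          (if h : i < p then
              MvPolynomial.rename (Fin.castLE h.le) (SP i)
                * MvPolynomial.X (⟨i, h⟩ : Fin p) ^ (p+Q+1-i)
            else SPO p i)) t with hg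
      have hfin : (∑ i : Fin (p+Q+1), iI p
          (MvPolynomial.C ((-1:ℝ)^((i:ℕ)+(p+Q)) / (Nat.factorial (p+Q+1-(i:ℕ)))) *
            (if h : (i:ℕ) < p then
                MvPolynomial.rename (Fin.castLE h.le) (SP (i:ℕ))
                  * MvPolynomial.X (⟨(i:ℕ), h⟩ : Fin p) ^ (p+Q+1-(i:ℕ))
              else SPO p (i:ℕ))) t)
          = ∑ i ∈ range (p+Q+1), g i := Fin.sum_univ_eq_sum_range g (p+Q+1)
      rw [hfin]
      have hsplit : ∑ i ∈ range (p+Q+1), g i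
          = ∑ i ∈ range p, g i + ∑ j ∈ range (Q+1), g (p+j) := by
        have h1 : ∑ i ∈ range (p+Q+1), g i
            = ∑ i ∈ Finset.Ico 0 p, g i + ∑ i ∈ Finset.Ico p (p+Q+1), g i := by
          rw [Finset.range_eq_Ico,
            Finset.sum_Ico_consecutive _ (Nat.zero_le p) (by omega : p ≤ p+Q+1)]
        have h2 : ∑ i ∈ Finset.Ico p (p+Q+1), g i = ∑ j ∈ range (Q+1), g (p+j) := by
          rw [Finset.sum_Ico_eq_sum_range, show p+Q+1-p = Q+1 by omega]
        rw [h1, h2, ← Finset.range_eq_Ico]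
      rw [hsplit]
      -- First part: the new top coefficient
      have hpart1 : ∑ i ∈ range p, g i
          = (-1:ℝ)^(Q+1) * dd p (Q+1) * t^(2*p+(Q+1)) / (Nat.factorial (Q+1-(Q+1)) : ℝ) := by
        have hterm : ∀ i ∈ range p, g i
            = (-1:ℝ)^(Q+1) * ((-1:ℝ)^(i+p+1) * ER (p+(Q+1)) i) * t^(2*p+(Q+1))
                / (Nat.factorial (2*p+(Q+1)) : ℝ) := by
          intro i hi
          simp only [mem_range] at hi
          simp only [hg]
          rw [dif_pos hi, iI_Cmul]
          have hMP := MP (p-1-i) i p (p+Q+1-i) (by omega) (SP i)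
            (1/((Nat.factorial i : ℝ) * (Nat.factorial (i+1) : ℝ))) (2*i) (L1 i) hi t
          rw [hMP]
          rw [show 2*i+(p+Q+1-i)+1+(p-1-i) = 2*p+(Q+1) by omega,
            show 2*i+(p+Q+1-i) = p+Q+1+i by omega]
          unfold ER
          rw [show p+(Q+1)+i = p+Q+1+i by omega, show p+(Q+1)-i = p+Q+1-i by omega]
          have hsgn : (-1:ℝ)^(i+(p+Q)) = (-1:ℝ)^(Q+1) * (-1:ℝ)^(i+p+1) := by
            rw [← pow_add]
            exact powpar (by omega)
          rw [hsgn]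
          have h1 := factR_ne (p+Q+1-i)
          have h2 := factR_ne i
          have h3 := factR_ne (i+1)
          have h4 := factR_ne (2*p+(Q+1))
          have h5 := factR_ne (p+Q+1+i)
          field_simp
        rw [Finset.sum_congr rfl hterm, show Q+1-(Q+1) = 0 by omega]
        simp only [Nat.factorial_zero, Nat.cast_one, div_one]
        rw [dd, if_neg (Nat.succ_ne_zero Q)]
        rw [Finset.sum_div, Finset.mul_sum, Finset.sum_mul]
        refine Finset.sum_congr rfl fun i _ => ?_
        ring
      rw [hpart1]
      -- Second part
      have hpart2 : ∑ j ∈ range (Q+1), g (p+j)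
          = ∑ r ∈ range (Q+1), (-1:ℝ)^r * dd p r * t^(2*p+r) / (Nat.factorial (Q+1-r) : ℝ) := by
        have hterm : ∀ j ∈ range (Q+1), g (p+j)
            = ∑ r ∈ range (Q+1), (if r ≤ j then
                ((-1:ℝ)^(j+Q) / (Nat.factorial (Q+1-j) : ℝ)) *
                  ((-1:ℝ)^r * dd p r * t^(2*p+r) / (Nat.factorial (j-r) : ℝ))
              else 0) := by
          intro j hj
          simp only [mem_range] at hj
          simp only [hg]
          rw [dif_neg (by omega : ¬ p+j < p), iI_Cmul, ihq j (by omega) t]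
          have hsgn : (-1:ℝ)^(p+j+(p+Q)) = (-1:ℝ)^(j+Q) := powpar (by omega)
          rw [show p+Q+1-(p+j) = Q+1-j by omega, hsgn, Finset.mul_sum]
          have hsub : range (j+1) ⊆ range (Q+1) := by
            apply Finset.range_subset_range.mpr
            omega
          rw [← Finset.sum_subset hsub (fun r _ hr => ?_)]
          · refine Finset.sum_congr rfl fun r hr => ?_
            simp only [mem_range] at hr
            rw [if_pos (by omega : r ≤ j)]
          · simp only [mem_range] at hr
            rw [if_neg (by omega : ¬ r ≤ j)]
        rw [Finset.sum_congr rfl hterm, Finset.sum_comm]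
        refine Finset.sum_congr rfl fun r hr => ?_
        simp only [mem_range] at hr
        have hico : ∑ j ∈ range (Q+1), (if r ≤ j then
            ((-1:ℝ)^(j+Q) / (Nat.factorial (Q+1-j) : ℝ)) *
              ((-1:ℝ)^r * dd p r * t^(2*p+r) / (Nat.factorial (j-r) : ℝ)) else 0)
            = ∑ j ∈ Finset.Ico r (Q+1),
              ((-1:ℝ)^(j+Q) / (Nat.factorial (Q+1-j) : ℝ)) *
                ((-1:ℝ)^r * dd p r * t^(2*p+r) / (Nat.factorial (j-r) : ℝ)) := by
          rw [Finset.range_eq_Ico, ← Finset.sum_subset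
            (Finset.Ico_subset_Ico (Nat.zero_le r) le_rfl) (fun j hj hj2 => ?_)]
          · refine Finset.sum_congr rfl fun j hj => ?_
            rw [if_pos (Finset.mem_Ico.mp hj).1]
          · simp only [Finset.mem_Ico] at hj hj2
            rw [if_neg (by omega)]
        rw [hico, Finset.sum_Ico_eq_sum_range]
        have hM : 1 ≤ Q+1-r := by omega
        have hbin := binaltf (Q+1-r) hM
        calc ∑ s ∈ range (Q+1-r),
              ((-1:ℝ)^(r+s+Q) / (Nat.factorial (Q+1-(r+s)) : ℝ)) *
                ((-1:ℝ)^r * dd p r * t^(2*p+r) / (Nat.factorial (r+s-r) : ℝ))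
            = ((-1:ℝ)^r * dd p r * t^(2*p+r)) * ∑ s ∈ range (Q+1-r),
                (-1:ℝ)^((Q+1-r)+1+s) / ((Nat.factorial ((Q+1-r)-s) : ℝ) * (Nat.factorial s : ℝ)) := by
              rw [Finset.mul_sum]
              refine Finset.sum_congr rfl fun s hs => ?_
              simp only [mem_range] at hs
              rw [show r+s-r = s by omega, show Q+1-(r+s) = (Q+1-r)-s by omega]
              have : (-1:ℝ)^(r+s+Q) = (-1:ℝ)^((Q+1-r)+1+s) := powpar (by omega)
              rw [this]
              ring
          _ = (-1:ℝ)^r * dd p r * t^(2*p+r) / (Nat.factorial (Q+1-r) : ℝ) := by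
              rw [hbin]
              ring
      rw [hpart2]
      conv_rhs => rw [Finset.sum_range_succ]
      ring

/-! ### final assembly helpers -/

private lemma eval_aeval {k l : ℕ} (g : Fin l → ℝ) (σf : Fin k → MvPolynomial (Fin l) ℝ)
    (P : MvPolynomial (Fin k) ℝ) :
    MvPolynomial.eval g (MvPolynomial.aeval σf P)
      = MvPolynomial.eval (fun j => MvPolynomial.eval g (σf j)) P := by
  induction P using MvPolynomial.induction_on with
  | C a => simp
  | add p q hp hq => simp only [map_add, hp, hq]
  | mul_X p i hp => simp only [map_mul, MvPolynomial.aeval_X, MvPolynomial.eval_X, hp]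

/-- iterating integrals over dummy variables -/
lemma strip (p : ℕ) (Q : MvPolynomial (Fin p) ℝ) (v : ℕ) (gc : ℕ → ℝ) (he : ℕ → ℕ)
    (H : ∀ x : ℝ, iI p Q x = ∑ r ∈ range v, gc r * x ^ he r) :
    ∀ k (h : p ≤ p + k) (t : ℝ), iI (p+k) (MvPolynomial.rename (Fin.castLE h) Q) t
      = ∑ r ∈ range v, gc r * (((he r).factorial : ℝ) / (((he r + k).factorial : ℝ))) * t ^ (he r + k) := by
  intro k
  induction k with
  | zero =>
    intro h t
    have hfn : (Fin.castLE h : Fin p → Fin (p+0)) = id := by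
      funext j
      rfl
    have hQ : (MvPolynomial.rename (Fin.castLE h) Q : MvPolynomial (Fin (p+0)) ℝ) = Q := by
      rw [hfn]
      exact MvPolynomial.rename_id_apply Q
    rw [hQ]
    show iI p Q t = _
    rw [H t]
    refine Finset.sum_congr rfl fun r _ => ?_
    rw [show he r + 0 = he r from rfl, div_self (factR_ne (he r)), mul_one]
  | succ k ihk =>
    intro h t
    have h2 : p ≤ p + k := Nat.le_add_right p k
    have heq : (MvPolynomial.rename (Fin.castLE h) Q : MvPolynomial (Fin (p+(k+1))) ℝ)
        = MvPolynomial.rename Fin.castSucc (MvPolynomial.rename (Fin.castLE h2) Q) := by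
      rw [MvPolynomial.rename_rename]
      rfl
    rw [heq]
    show iI ((p+k)+1) (MvPolynomial.rename Fin.castSucc (MvPolynomial.rename (Fin.castLE h2) Q)) t = _
    rw [iI_peel_dummy]
    have h3 : ∀ x ∈ Set.uIcc (0:ℝ) t, iI (p+k) (MvPolynomial.rename (Fin.castLE h2) Q) x
        = ∑ r ∈ range v, gc r * (((he r).factorial : ℝ) / (((he r + k).factorial : ℝ))) * x ^ (he r + k) :=
      fun x _ => ihk h2 x
    rw [intervalIntegral.integral_congr h3]
    rw [intervalIntegral.integral_finset_sum (fun r _ =>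
      (by apply Continuous.intervalIntegrable; fun_prop))]
    refine Finset.sum_congr rfl fun r _ => ?_
    rw [intervalIntegral.integral_const_mul, integral_pow]
    have h0 : ((0:ℝ)) ^ (he r + k + 1) = 0 := zero_pow (Nat.succ_ne_zero _)
    rw [h0]
    have hfact : ((he r + (k+1)).factorial : ℝ) = ((he r : ℝ)+k+1) * ((he r + k).factorial : ℝ) := by
      have : he r + (k+1) = (he r + k)+1 := rfl
      rw [this, Nat.factorial_succ]
      push_cast
      ring
    rw [show he r + (k+1) = he r + k + 1 from rfl] at hfact ⊢
    rw [hfact]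
    have f1 := factR_ne (he r)
    have f2 := factR_ne (he r + k)
    have f3 : ((he r : ℝ)+k+1) ≠ 0 := by positivity
    field_simp
    push_cast; ring

/-- the reflected form of `dd` via the alternating Catalan identity -/
lemma ddE (p r : ℕ) : dd p r
    = (∑ s ∈ range (r+1), (-1:ℝ)^s * ER (p+r) (p+s)) / ((2*p+r).factorial : ℝ) := by
  rcases Nat.eq_zero_or_pos r with hr | hr
  · subst hr
    rw [dd, if_pos rfl, Finset.sum_range_one]
    unfold ER
    simp only [Nat.add_zero]
    rw [show p+p = 2*p by omega, show p-p = 0 by omega]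
    simp only [pow_zero, one_mul, Nat.factorial_zero, Nat.cast_one, mul_one]
    have f1 := factR_ne p
    have f2 := factR_ne (p+1)
    have f3 := factR_ne (2*p)
    field_simp
  · rw [dd, if_neg (by omega)]
    congr 1
    have h0 := Dstar (p+r)
    rw [if_neg (by omega)] at h0
    have hsplit : ∑ i ∈ range (p+r+1), (-1:ℝ)^i * ER (p+r) i
        = ∑ i ∈ range p, (-1:ℝ)^i * ER (p+r) i
          + ∑ s ∈ range (r+1), (-1:ℝ)^(p+s) * ER (p+r) (p+s) := by
      have h1 : ∑ i ∈ range (p+r+1), (-1:ℝ)^i * ER (p+r) i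
          = ∑ i ∈ Finset.Ico 0 p, (-1:ℝ)^i * ER (p+r) i
            + ∑ i ∈ Finset.Ico p (p+r+1), (-1:ℝ)^i * ER (p+r) i := by
        rw [Finset.range_eq_Ico,
          Finset.sum_Ico_consecutive _ (Nat.zero_le p) (by omega : p ≤ p+r+1)]
      have h2 : ∑ i ∈ Finset.Ico p (p+r+1), (-1:ℝ)^i * ER (p+r) i
          = ∑ s ∈ range (r+1), (-1:ℝ)^(p+s) * ER (p+r) (p+s) := by
        rw [Finset.sum_Ico_eq_sum_range, show p+r+1-p = r+1 by omega]
      rw [h1, h2, ← Finset.range_eq_Ico]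
    have h3 : ∑ i ∈ range p, (-1:ℝ)^i * ER (p+r) i
        = - ∑ s ∈ range (r+1), (-1:ℝ)^(p+s) * ER (p+r) (p+s) := by
      rw [hsplit] at h0
      linarith
    calc ∑ i ∈ range p, (-1:ℝ)^(i+p+1) * ER (p+r) i
        = (-1:ℝ)^(p+1) * ∑ i ∈ range p, (-1:ℝ)^i * ER (p+r) i := by
          rw [Finset.mul_sum]
          refine Finset.sum_congr rfl fun i _ => ?_
          rw [← mul_assoc, ← pow_add, powpar (a := p+1+i) (b := i+p+1) (by omega)]
      _ = ∑ s ∈ range (r+1), (-1:ℝ)^s * ER (p+r) (p+s) := by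
          rw [h3, mul_neg, Finset.mul_sum, ← Finset.sum_neg_distrib]
          refine Finset.sum_congr rfl fun s _ => ?_
          have e : -((-1:ℝ)^(p+1) * ((-1:ℝ)^(p+s) * ER (p+r) (p+s)))
              = ((-1:ℝ)^(p+1) * (-1:ℝ)^(p+s) * (-1:ℝ)^1) * ER (p+r) (p+s) := by
            ring
          rw [e, ← pow_add, ← pow_add, powpar (a := p+1+(p+s)+1) (b := s) (by omega)]

/-- the alternating Vandermonde convolution in factorial form -/
lemma innerV (P M : ℕ) :
    ∑ a ∈ range (M+1), (-1:ℝ)^a * ((P+a).factorial : ℝ)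
        / (((a).factorial : ℝ) * ((M-a).factorial : ℝ) * ((P+M+a).factorial : ℝ))
      = (((2*M-1).choose M : ℕ) : ℝ) * ((P).factorial : ℝ) / ((P+2*M).factorial : ℝ) := by
  rcases Nat.eq_zero_or_pos M with hM | hM
  · subst hM
    rw [Finset.sum_range_one]
    norm_num
  · have hv := vand P (2*M-1) M
    rw [show P+1+(2*M-1) = P+2*M by omega] at hv
    have key : ∀ a ∈ range (M+1), (-1:ℝ)^a * ((P+a).factorial : ℝ)
        / (((a).factorial : ℝ) * ((M-a).factorial : ℝ) * ((P+M+a).factorial : ℝ))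
        = ((-1:ℝ)^a * ((P+a).choose a : ℝ) * ((P+2*M).choose (M-a) : ℝ))
            * (((P).factorial : ℝ) / ((P+2*M).factorial : ℝ)) := by
      intro a ha
      simp only [mem_range] at ha
      have hc1 : ((P+a).choose a) * (Nat.factorial a) * (Nat.factorial (P+a-a)) = Nat.factorial (P+a) :=
        Nat.choose_mul_factorial_mul_factorial (Nat.le_add_left a P)
      rw [show P+a-a = P by omega] at hc1
      have hc2 : ((P+2*M).choose (M-a)) * (Nat.factorial (M-a)) * (Nat.factorial (P+2*M-(M-a)))
          = Nat.factorial (P+2*M) := Nat.choose_mul_factorial_mul_factorial (by omega)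
      rw [show P+2*M-(M-a) = P+M+a by omega] at hc2
      have hc1R : ((P+a).choose a : ℝ) * (Nat.factorial a : ℝ) * (Nat.factorial P : ℝ)
          = ((P+a).factorial : ℝ) := by exact_mod_cast hc1
      have hc2R : ((P+2*M).choose (M-a) : ℝ) * ((M-a).factorial : ℝ) * ((P+M+a).factorial : ℝ)
          = ((P+2*M).factorial : ℝ) := by exact_mod_cast hc2
      have f1 := factR_ne a
      have f2 := factR_ne (M-a)
      have f3 := factR_ne (P+M+a)
      have f4 := factR_ne P
      have f5 := factR_ne (P+2*M)
      have hchoose1 : (((P+a).choose a : ℕ) : ℝ)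
          = ((P+a).factorial : ℝ)/((a.factorial : ℝ) * (P.factorial : ℝ)) := by
        rw [eq_div_iff (mul_ne_zero f1 f4)]
        linear_combination hc1R
      have hchoose2 : (((P+2*M).choose (M-a) : ℕ) : ℝ)
          = ((P+2*M).factorial : ℝ)/(((M-a).factorial : ℝ) * ((P+M+a).factorial : ℝ)) := by
        rw [eq_div_iff (mul_ne_zero f2 f3)]
        linear_combination hc2R
      rw [hchoose1, hchoose2]
      field_simp
    rw [Finset.sum_congr rfl key, ← Finset.sum_mul, hv]
    ring

theorem stmt5 (n m : ℕ) (hm : 1 ≤ m) (hmn : m ≤ n) :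
    iterInt n (Snm n m) 1
      = 1 / (Nat.factorial n * Nat.factorial (n + 1)) +
        (1 / (Nat.factorial (2 * n) : ℝ)) *
          ∑ k ∈ Finset.Icc 1 m,
            (Nat.factorial (2 * n - 2 * k) : ℝ) /
                ((Nat.factorial (n - k) : ℝ) * (Nat.factorial (n + 1 - k) : ℝ)) *
              (Nat.choose (2 * k - 1) k : ℝ) := by
  obtain ⟨p, rfl⟩ : ∃ p, n = p + m := ⟨n - m, by omega⟩
  have hfun : Snm (p+m) m = fun u => MvPolynomial.eval u
      (MvPolynomial.rename (Fin.castLE (Nat.le_add_right p m)) (SPO p (p+m))) := by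
    funext u
    unfold Snm
    rw [S_eq, MvPolynomial.eval_rename]
    unfold SPO
    rw [eval_aeval]
    have harg : (fun i : Fin (p+m) => if (i:ℕ) < p+m-m then u i else 1)
        = (fun j : Fin (p+m) => MvPolynomial.eval (u ∘ Fin.castLE (Nat.le_add_right p m))
            (if h : (j:ℕ) < p then MvPolynomial.X (⟨(j:ℕ), h⟩ : Fin p)
              else (1 : MvPolynomial (Fin p) ℝ))) := by
      funext j
      by_cases hj : (j:ℕ) < p
      · rw [if_pos (show (j:ℕ) < p+m-m by omega), dif_pos hj, MvPolynomial.eval_X]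
        rfl
      · rw [if_neg (show ¬ (j:ℕ) < p+m-m by omega), dif_neg hj, map_one]
    rw [harg]
  rw [hfun]
  show iI (p+m) (MvPolynomial.rename (Fin.castLE (Nat.le_add_right p m)) (SPO p (p+m))) 1 = _
  have HPhi : ∀ x : ℝ, iI p (SPO p (p+m)) x
      = ∑ r ∈ range (m+1), ((-1:ℝ)^r * dd p r / ((Nat.factorial (m-r) : ℝ))) * x ^ (2*p+r) := by
    intro x
    rw [Phi p m x]
    exact Finset.sum_congr rfl fun r _ => by ring
  rw [strip p (SPO p (p+m)) (m+1) (fun r => (-1:ℝ)^r * dd p r / ((Nat.factorial (m-r) : ℝ)))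
    (fun r => 2*p+r) HPhi m (Nat.le_add_right p m) 1]
  simp only [one_pow, mul_one]
  -- from here on this is a pure identity
  have hdd : ∀ r ∈ range (m+1),
      ((-1:ℝ)^r * dd p r / ((Nat.factorial (m-r) : ℝ)))
        * ((Nat.factorial (2*p+r) : ℝ) / (Nat.factorial (2*p+r+m) : ℝ))
      = ∑ s ∈ range (m+1), (if s ≤ r then (-1:ℝ)^(r+s) * ER (p+r) (p+s)
          / ((Nat.factorial (m-r) : ℝ) * (Nat.factorial (2*p+r+m) : ℝ)) else 0) := by
    intro r hr
    simp only [mem_range] at hr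
    rw [ddE p r]
    have hA := factR_ne (2*p+r)
    have hB := factR_ne (m-r)
    have hC := factR_ne (2*p+r+m)
    have h1 : ((-1:ℝ)^r * ((∑ s ∈ range (r+1), (-1:ℝ)^s * ER (p+r) (p+s))
          / (Nat.factorial (2*p+r) : ℝ)) / ((Nat.factorial (m-r) : ℝ)))
        * ((Nat.factorial (2*p+r) : ℝ) / (Nat.factorial (2*p+r+m) : ℝ))
        = ∑ s ∈ range (r+1), (-1:ℝ)^(r+s) * ER (p+r) (p+s)
            / ((Nat.factorial (m-r) : ℝ) * (Nat.factorial (2*p+r+m) : ℝ)) := by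
      rw [Finset.sum_div, Finset.mul_sum, Finset.sum_div, Finset.sum_mul]
      refine Finset.sum_congr rfl fun s _ => ?_
      rw [pow_add]
      field_simp
    rw [h1]
    calc ∑ s ∈ range (r+1), (-1:ℝ)^(r+s) * ER (p+r) (p+s)
            / ((Nat.factorial (m-r) : ℝ) * (Nat.factorial (2*p+r+m) : ℝ))
        = ∑ s ∈ range (r+1), (if s ≤ r then (-1:ℝ)^(r+s) * ER (p+r) (p+s)
            / ((Nat.factorial (m-r) : ℝ) * (Nat.factorial (2*p+r+m) : ℝ)) else 0) := by
          refine (Finset.sum_congr rfl fun s hs => ?_)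
          simp only [mem_range] at hs
          rw [if_pos (by omega : s ≤ r)]
      _ = ∑ s ∈ range (m+1), (if s ≤ r then (-1:ℝ)^(r+s) * ER (p+r) (p+s)
            / ((Nat.factorial (m-r) : ℝ) * (Nat.factorial (2*p+r+m) : ℝ)) else 0) := by
          refine Finset.sum_subset (Finset.range_subset_range.mpr (by omega)) fun s _ hs => ?_
          simp only [mem_range] at hs
          rw [if_neg (by omega)]
  rw [Finset.sum_congr rfl hdd, Finset.sum_comm]
  have hinner : ∀ s ∈ range (m+1),
      (∑ r ∈ range (m+1), (if s ≤ r then (-1:ℝ)^(r+s) * ER (p+r) (p+s)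
          / ((Nat.factorial (m-r) : ℝ) * (Nat.factorial (2*p+r+m) : ℝ)) else 0))
      = (((2*(m-s)-1).choose (m-s) : ℕ) : ℝ) * ((Nat.factorial (2*p+2*s)) : ℝ)
          / (((Nat.factorial (p+s)) : ℝ) * ((Nat.factorial (p+s+1)) : ℝ)
              * ((Nat.factorial (2*p+2*m)) : ℝ)) := by
    intro s hs
    simp only [mem_range] at hs
    have hico : (∑ r ∈ range (m+1), (if s ≤ r then (-1:ℝ)^(r+s) * ER (p+r) (p+s)
          / ((Nat.factorial (m-r) : ℝ) * (Nat.factorial (2*p+r+m) : ℝ)) else 0))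
        = ∑ r ∈ Finset.Ico s (m+1), (-1:ℝ)^(r+s) * ER (p+r) (p+s)
            / ((Nat.factorial (m-r) : ℝ) * (Nat.factorial (2*p+r+m) : ℝ)) := by
      rw [Finset.range_eq_Ico, ← Finset.sum_subset
        (Finset.Ico_subset_Ico (Nat.zero_le s) le_rfl) (fun r h1 h2 => ?_)]
      · refine Finset.sum_congr rfl fun r h1 => ?_
        rw [if_pos (Finset.mem_Ico.mp h1).1]
      · simp only [Finset.mem_Ico] at h1 h2
        rw [if_neg (by omega)]
    rw [hico, Finset.sum_Ico_eq_sum_range, show m+1-s = (m-s)+1 by omega]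
    have hterm2 : ∀ a ∈ range ((m-s)+1),
        (-1:ℝ)^((s+a)+s) * ER (p+(s+a)) (p+s)
          / ((Nat.factorial (m-(s+a)) : ℝ) * (Nat.factorial (2*p+(s+a)+m) : ℝ))
        = (1/(((Nat.factorial (p+s)) : ℝ) * ((Nat.factorial (p+s+1)) : ℝ)))
            * ((-1:ℝ)^a * ((Nat.factorial (2*p+2*s+a)) : ℝ)
              / (((Nat.factorial a) : ℝ) * ((Nat.factorial ((m-s)-a)) : ℝ)
                  * ((Nat.factorial (2*p+2*s+(m-s)+a)) : ℝ))) := by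
      intro a ha
      simp only [mem_range] at ha
      unfold ER
      rw [show p+(s+a)+(p+s) = 2*p+2*s+a by omega,
        show p+(s+a)-(p+s) = a by omega,
        show m-(s+a) = (m-s)-a by omega,
        show 2*p+(s+a)+m = 2*p+2*s+(m-s)+a by omega,
        powpar (a := (s+a)+s) (b := a) (by omega)]
      ring
    rw [Finset.sum_congr rfl hterm2, ← Finset.mul_sum, innerV (2*p+2*s) (m-s),
      show 2*p+2*s+2*(m-s) = 2*p+2*m by omega]
    ring
  rw [Finset.sum_congr rfl hinner, ← Finset.sum_range_reflect]
  have hterm3 : ∀ k ∈ range (m+1),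
      (((2*(m-(m+1-1-k))-1).choose (m-(m+1-1-k)) : ℕ) : ℝ)
          * ((Nat.factorial (2*p+2*(m+1-1-k))) : ℝ)
          / (((Nat.factorial (p+(m+1-1-k))) : ℝ) * ((Nat.factorial (p+(m+1-1-k)+1)) : ℝ)
              * ((Nat.factorial (2*p+2*m)) : ℝ))
      = (((2*k-1).choose k : ℕ) : ℝ) * ((Nat.factorial (2*(p+m)-2*k)) : ℝ)
          / (((Nat.factorial (p+m-k)) : ℝ) * ((Nat.factorial (p+m+1-k)) : ℝ)
              * ((Nat.factorial (2*(p+m))) : ℝ)) := by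
    intro k hk
    simp only [mem_range] at hk
    rw [show m+1-1-k = m-k by omega, show m-(m-k) = k by omega,
      show 2*p+2*(m-k) = 2*(p+m)-2*k by omega, show p+(m-k)+1 = p+m+1-k by omega,
      show p+(m-k) = p+m-k by omega, show 2*p+2*m = 2*(p+m) by omega]
  rw [Finset.sum_congr rfl hterm3]
  rw [Finset.range_eq_Ico, Finset.sum_eq_sum_Ico_succ_bot (show 0 < m+1 by omega),
    Finset.Ico_add_one_right_eq_Icc]
  congr 1
  · rw [show 2*(p+m)-2*0 = 2*(p+m) by omega, show p+m-0 = p+m by omega,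
      show p+m+1-0 = p+m+1 by omega]
    norm_num
    have f1 := factR_ne (p+m)
    have f2 := factR_ne (p+m+1)
    have f3 := factR_ne (2*(p+m))
    field_simp
  · rw [Finset.mul_sum]
    refine Finset.sum_congr rfl fun k hk => ?_
    ring
end

section
/- Let S_n and S_{n,m} be as in the recursive definition. Then for n ≥ 1, m ∈ {1,...,n}, u_{n+1} ∈ [0,1], the iterated integral ∫_0^{u_{n+1}} ··· ∫_0^{u_2} S_{n,m}(u) du_1···du_n equals ∑_{l=0}^m (u_{n+1}^{2n-l}/(2n)!) · (1/(n-l+1)) · C(2n, l) · ∑_{h=0}^{m-l} (-1)^h C(2n-2l-h, n-l) C(n-l+1, h). -/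
open intervalIntegral

open Finset

def RepP : ∀ k : ℕ, ((Fin k → ℝ) → ℝ) → (ℝ → ℝ) → Prop
  | 0 => fun f P => ∀ x, P x = f (fun i => i.elim0)
  | (k+1) => fun f P => ∃ g : ℝ → ℝ → ℝ,
      (∀ x, RepP k (fun u => f (Fin.snoc u x)) (g x)) ∧
      Continuous (fun x => g x x) ∧
      ∀ t, P t = ∫ x in (0:ℝ)..t, g x x

theorem RepP.eval : ∀ {k f P}, RepP k f P → ∀ t, iterInt k f t = P t := by
  intro k
  induction k with
  | zero => intro f P h t; simp [iterInt, h t]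
  | succ k ih =>
    intro f P h t
    obtain ⟨g, hg, _, hP⟩ := h
    rw [hP t]
    show (∫ x in (0:ℝ)..t, iterInt k (fun u => f (Fin.snoc u x)) x) = _
    congr 1
    funext x
    exact ih (hg x) x

theorem RepP.cont : ∀ {k f P}, RepP k f P → Continuous P := by
  intro k
  match k with
  | 0 =>
    intro f P h
    have : P = fun _ => f (fun i => i.elim0) := funext h
    rw [this]; exact continuous_const
  | (k+1) =>
    intro f P h
    obtain ⟨g, hg, hc, hP⟩ := h
    have : P = fun t => ∫ x in (0:ℝ)..t, g x x := funext hP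
    rw [this]
    exact intervalIntegral.continuous_primitive (fun a b => hc.intervalIntegrable a b) 0

theorem RepP.congr {k f f' P} (h : ∀ u, f u = f' u) (hR : RepP k f P) : RepP k f' P := by
  have : f = f' := funext h
  rwa [this] at hR

theorem RepP.congrP {k f P P'} (h : ∀ t, P t = P' t) (hR : RepP k f P) : RepP k f P' := by
  have : P = P' := funext h
  rwa [this] at hR

theorem RepP.smul : ∀ {k f P}, RepP k f P → ∀ c : ℝ, RepP k (fun u => c * f u) (fun t => c * P t) := by
  intro k
  induction k with
  | zero => intro f P h c x; simp only []; rw [h x]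
  | succ k ih =>
    intro f P h c
    obtain ⟨g, hg, hc, hP⟩ := h
    exact ⟨fun x => fun y => c * g x y,
      fun x => ih (hg x) c,
      by exact continuous_const.mul hc,
      fun t => by simp only []; rw [hP t, intervalIntegral.integral_const_mul]⟩

theorem RepP.zero : ∀ k, RepP k (fun _ => (0:ℝ)) (fun _ => 0) := by
  intro k
  induction k with
  | zero => intro x; rfl
  | succ k ih =>
    exact ⟨fun _ _ => 0, fun x => ih, continuous_const, fun t => by simp⟩

theorem RepP.add : ∀ {k f P f' P'}, RepP k f P → RepP k f' P' →
    RepP k (fun u => f u + f' u) (fun t => P t + P' t) := by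
  intro k
  induction k with
  | zero => intro f P f' P' h h' x; simp only []; rw [h x, h' x]
  | succ k ih =>
    intro f P f' P' h h'
    obtain ⟨g, hg, hc, hP⟩ := h
    obtain ⟨g', hg', hc', hP'⟩ := h'
    refine ⟨fun x y => g x y + g' x y, fun x => ih (hg x) (hg' x), hc.add hc', fun t => ?_⟩
    simp only []
    rw [hP t, hP' t,
      ← intervalIntegral.integral_add (hc.intervalIntegrable 0 t) (hc'.intervalIntegrable 0 t)]

theorem RepP.sum {k : ℕ} {ι : Type*} (s : Finset ι) (f : ι → (Fin k → ℝ) → ℝ) (P : ι → ℝ → ℝ)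
    (h : ∀ i ∈ s, RepP k (f i) (P i)) :
    RepP k (fun u => ∑ i ∈ s, f i u) (fun t => ∑ i ∈ s, P i t) := by
  classical
  induction s using Finset.induction_on with
  | empty => simpa using RepP.zero k
  | @insert a s' hx ih =>
    simp only [Finset.sum_insert hx]
    exact RepP.add (h a (Finset.mem_insert_self a s'))
      (ih (fun i hi => h i (Finset.mem_insert_of_mem hi)))

theorem RepP.stepIgnore {k f P} (h : RepP k f P) :
    RepP (k+1) (fun u => f (Fin.init u)) (fun t => ∫ x in (0:ℝ)..t, P x) := by
  refine ⟨fun _ => P, fun x => ?_, h.cont, fun t => rfl⟩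
  exact h.congr (fun u => by simp only []; rw [Fin.init_snoc])

theorem RepP.lastPow {k f P} (h : RepP k f P) (q : ℕ) :
    RepP (k+1) (fun u => (u (Fin.last k))^q * f (Fin.init u))
      (fun t => ∫ x in (0:ℝ)..t, x^q * P x) := by
  refine ⟨fun x y => x^q * P y, fun x => ?_, ?_, fun t => rfl⟩
  · refine RepP.congr (fun u => ?_) ((h.smul (x^q)))
    simp only []
    rw [Fin.snoc_last, Fin.init_snoc]
  · exact (continuous_pow q).mul h.cont

theorem integral_monomial (a : ℝ) (e : ℕ) (t : ℝ) :
    (∫ x in (0:ℝ)..t, a * x^e) = a * t^(e+1) / (e+1) := by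
  rw [intervalIntegral.integral_const_mul, integral_pow]
  simp [mul_div_assoc]

theorem RepP.liftP {i : ℕ} {g : (Fin i → ℝ) → ℝ} {P : ℝ → ℝ} (h : RepP i g P)
    (r : ℕ) (a : ℕ → ℝ) (e : ℕ → ℕ) (hP : ∀ t, P t = ∑ l ∈ range r, a l * t ^ e l) :
    ∀ k (hik : i ≤ k), RepP k (fun u => g (fun s => u (Fin.castLE hik s)))
      (fun t => ∑ l ∈ range r,
        a l * (((e l).factorial : ℝ) / (((e l + (k-i)).factorial : ℝ))) * t ^ (e l + (k-i))) := by
  have self : ∀ (k : ℕ) (hik : i = k),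
      RepP k (fun u => g (fun s => u (Fin.castLE (hik ▸ le_refl i) s)))
      (fun t => ∑ l ∈ range r,
        a l * (((e l).factorial : ℝ) / (((e l + (k-i)).factorial : ℝ))) * t ^ (e l + (k-i))) := by
    intro k hik
    subst hik
    refine (h.congr ?_).congrP ?_
    · intro u
      rfl
    · intro t
      rw [hP t]
      refine Finset.sum_congr rfl (fun l _ => ?_)
      rw [Nat.sub_self, Nat.add_zero, div_self (by exact_mod_cast (Nat.factorial_ne_zero _))]
      ring
  intro k
  induction k with
  | zero =>
    intro hik
    exact self 0 (Nat.le_zero.mp hik)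
  | succ k ih =>
    intro hik
    by_cases hik' : i ≤ k
    · have step := (ih hik').stepIgnore
      refine (step.congr ?_).congrP ?_
      · intro u
        rfl
      · intro t
        rw [intervalIntegral.integral_finset_sum (fun l _ =>
          (Continuous.intervalIntegrable (u := fun x : ℝ => a l * (((e l).factorial : ℝ) / (((e l + (k-i)).factorial : ℝ))) * x ^ (e l + (k-i))) (by fun_prop) _ _))]
        refine Finset.sum_congr rfl (fun l _ => ?_)
        rw [integral_monomial]
        have h1 : e l + (k + 1 - i) = (e l + (k - i)) + 1 := by omega
        rw [h1]
        have h2 : (((e l + (k - i)) + 1).factorial : ℝ)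
            = (((e l + (k-i)) : ℕ) + 1 : ℝ) * ((e l + (k - i)).factorial : ℝ) := by
          rw [Nat.factorial_succ]; push_cast; ring
        rw [h2]
        have h3 : ((e l + (k-i) : ℕ) : ℝ) + 1 ≠ 0 := by positivity
        have h4 : ((e l + (k-i)).factorial : ℝ) ≠ 0 := by
          exact_mod_cast Nat.factorial_ne_zero _
        field_simp
    · exact self (k+1) (by omega)

noncomputable def Tc (a d : ℕ) : ℝ :=
  (-1:ℝ)^d * ((a-1).choose d : ℝ) * (((2*a-d).choose (a-d) : ℕ) : ℝ)

noncomputable def phir (n k l : ℕ) : ℝ :=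
  Tc (n-l) (n-k-l) /
    ((Nat.factorial l : ℝ) * (Nat.factorial (n+k-l) : ℝ) * ((n-l+1 : ℕ) : ℝ))

noncomputable def Phif (n k : ℕ) : ℝ → ℝ :=
  fun t => ∑ l ∈ range (n-k+1), phir n k l * t^(n+k-l)

def pad (k n : ℕ) (u : Fin k → ℝ) : Fin n → ℝ :=
  fun i => if h : (i:ℕ) < k then u ⟨i, h⟩ else 1

lemma phir_ii (i : ℕ) : phir i i 0 = 1 / ((i.factorial : ℝ) * ((i+1).factorial : ℝ)) := by
  unfold phir Tc
  simp only [Nat.sub_zero, Nat.sub_self]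
  rw [show i + i = 2*i by omega]
  rw [Nat.cast_choose ℝ (by omega : i ≤ 2*i), show 2*i - i = i by omega]
  have h5 : ((i+1).factorial : ℝ) = ((i:ℝ)+1) * (i.factorial : ℝ) := by
    rw [Nat.factorial_succ]; push_cast; ring
  have hf : (i.factorial : ℝ) ≠ 0 := by exact_mod_cast Nat.factorial_ne_zero _
  have hf2 : ((2*i).factorial : ℝ) ≠ 0 := by exact_mod_cast Nat.factorial_ne_zero _
  simp only [Nat.choose_zero_right, Nat.factorial_zero, pow_zero]
  push_cast
  rw [h5]
  field_simp

lemma fact_step (x : ℕ) : ((x+1).factorial : ℝ) = ((x:ℝ)+1) * (x.factorial : ℝ) := by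
  rw [Nat.factorial_succ]; push_cast; ring

lemma fact_ne (x : ℕ) : ((x.factorial : ℕ) : ℝ) ≠ 0 := by
  exact_mod_cast Nat.factorial_ne_zero x

lemma NAT_A (d c : ℕ) :
    ((d+c+1).choose d : ℝ) * ((d+2*c+4).choose (c+2) : ℝ)
      + ((d+c+1).choose (d+1) : ℝ) * ((d+2*c+3).choose (c+1) : ℝ)
    = ((d+2*c+3).choose (d+c+2) : ℝ) * ((d+c+3).choose (d+1) : ℝ) := by
  rw [Nat.cast_choose ℝ (by omega : d ≤ d+c+1), Nat.cast_choose ℝ (by omega : c+2 ≤ d+2*c+4),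
    Nat.cast_choose ℝ (by omega : d+1 ≤ d+c+1), Nat.cast_choose ℝ (by omega : c+1 ≤ d+2*c+3),
    Nat.cast_choose ℝ (by omega : d+c+2 ≤ d+2*c+3), Nat.cast_choose ℝ (by omega : d+1 ≤ d+c+3)]
  rw [show d+c+1-d = c+1 by omega, show d+2*c+4-(c+2) = d+c+2 by omega,
    show d+c+1-(d+1) = c by omega, show d+2*c+3-(c+1) = d+c+2 by omega,
    show d+2*c+3-(d+c+2) = c+1 by omega, show d+c+3-(d+1) = c+2 by omega]
  rw [show d+2*c+4 = (d+2*c+3)+1 by omega, fact_step (d+2*c+3),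
    show d+c+3 = (d+c+2)+1 by omega, fact_step (d+c+2),
    show d+c+2 = (d+c+1)+1 by omega, fact_step (d+c+1),
    show c+2 = (c+1)+1 by omega, fact_step (c+1), fact_step c,
    fact_step d]
  have h1 := fact_ne d; have h2 := fact_ne c; have h3 := fact_ne (d+c+1)
  have h4 := fact_ne (d+2*c+3)
  push_cast
  field_simp
  ring

lemma TA (a : ℕ) : ∀ d ≤ a,
    ∑ h ∈ range (d+1), (-1:ℝ)^h * ((2*a - h).choose a : ℝ) * ((a+1).choose h : ℝ)
      = Tc a d := by
  intro d
  induction d with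
  | zero =>
    intro _
    simp [Tc]
  | succ d ih =>
    intro hd
    rw [Finset.sum_range_succ, ih (by omega)]
    unfold Tc
    by_cases hda : d + 1 = a
    · subst hda
      rw [show d+1-1 = d by omega, show 2*(d+1) - d = d+2 by omega, show d+1-d = 1 by omega,
        show 2*(d+1)-(d+1) = d+1 by omega, show d+1-(d+1) = 0 by omega,
        Nat.choose_succ_self]
      simp only [Nat.choose_self, Nat.choose_one_right, Nat.cast_zero, Nat.cast_one, mul_one,
        one_mul, mul_zero, zero_mul]
      rw [show d+1+1 = (d+1)+1 by omega, Nat.choose_succ_self_right, pow_succ]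
      push_cast
      ring
    · -- d + 2 ≤ a
      have h2 : d + 2 ≤ a := by omega
      obtain ⟨c, rfl⟩ : ∃ c, a = d + 2 + c := ⟨a - (d+2), by omega⟩
      have key := NAT_A d c
      rw [show (d+2+c) - 1 = d+c+1 by omega, show 2*(d+2+c) - d = d+2*c+4 by omega,
        show d+2+c-d = c+2 by omega, show 2*(d+2+c)-(d+1) = d+2*c+3 by omega,
        show d+2+c-(d+1) = c+1 by omega, show d+2+c = d+c+2 by omega,
        show d+c+2+1 = d+c+3 by omega]
      linear_combination ((-1:ℝ)^d) * key

lemma alt_sum (l : ℕ) (hl : 1 ≤ l) :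
    ∑ j ∈ range l, (-1:ℝ)^j * (l.choose (j+1) : ℝ) = 1 := by
  have h := Int.alternating_sum_range_choose (n := l)
  rw [if_neg (by omega)] at h
  have h' : ∑ m ∈ range (l+1), (-1:ℝ)^m * (l.choose m : ℝ) = 0 := by
    exact_mod_cast congrArg (fun z : ℤ => (z : ℝ)) h
  rw [Finset.sum_range_succ'] at h'
  simp only [pow_zero, Nat.choose_zero_right, Nat.cast_one, one_mul] at h'
  have e : ∀ j ∈ range l, (-1:ℝ)^(j+1) * (l.choose (j+1):ℝ)
      = -((-1:ℝ)^j * (l.choose (j+1):ℝ)) := fun j _ => by ring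
  rw [Finset.sum_congr rfl e, Finset.sum_neg_distrib] at h'
  linarith

lemma Ll (n k l : ℕ) (hk : k ≤ n+1) (hl1 : 1 ≤ l) (hl : l ≤ n+1-k) :
    phir (n+1) k l
      = ∑ j ∈ range l, (-1:ℝ)^j / ((j+1).factorial : ℝ) * phir (n-j) k (l-1-j) := by
  have step : ∀ j ∈ range l, (-1:ℝ)^j / ((j+1).factorial : ℝ) * phir (n-j) k (l-1-j)
      = ((-1:ℝ)^j * (l.choose (j+1) : ℝ)) *
        (Tc (n+1-l) (n+1-k-l) /
          ((l.factorial : ℝ) * ((n+1+k-l).factorial : ℝ) * ((n+1-l+1 : ℕ):ℝ))) := by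
    intro j hj
    rw [Finset.mem_range] at hj
    unfold phir
    rw [show (n-j) - (l-1-j) = n+1-l by omega, show (n-j)-k-(l-1-j) = n+1-k-l by omega,
      show (n-j)+k-(l-1-j) = n+1+k-l by omega]
    rw [Nat.cast_choose ℝ (by omega : j+1 ≤ l), show l - (j+1) = l-1-j by omega]
    have h1 := fact_ne (j+1); have h2 := fact_ne (l-1-j); have h3 := fact_ne l
    have h4 := fact_ne (n+1+k-l)
    have h5 : (((n+1-l+1 : ℕ)):ℝ) ≠ 0 := by positivity
    field_simp
    all_goals first | ring | exact Or.inl trivial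
  rw [Finset.sum_congr rfl step, ← Finset.sum_mul, alt_sum l hl1, one_mul]
  rfl

lemma NAT1R (n k : ℕ) (hk : k ≤ n) :
    ((n.choose (n-k)):ℝ) * ((n+k+2).choose (k+1) : ℝ) / ((n:ℝ)+2)
      + ((n.choose (n+1-k)):ℝ) * ((n+k+1).choose k : ℝ) / ((n:ℝ)+2)
    = ((n+k+1).factorial : ℝ)
        / (((n+1-k).factorial : ℝ) * (k.factorial : ℝ) * ((k+1).factorial : ℝ)) := by
  rcases Nat.eq_zero_or_pos k with hk0 | hk1
  · subst hk0
    rw [Nat.sub_zero, Nat.choose_self, show n+1-0 = n+1 by omega, Nat.choose_succ_self,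
      show n+0+2 = n+2 by omega, show n+0+1 = n+1 by omega, Nat.choose_one_right]
    simp only [Nat.cast_zero, Nat.cast_one, one_mul, zero_mul, Nat.factorial_zero,
      Nat.factorial_one, Nat.cast_ofNat, mul_one]
    have h1 := fact_ne (n+1)
    have h2 : ((n:ℝ)+2) ≠ 0 := by positivity
    push_cast
    field_simp
    simp
  · obtain ⟨b, rfl⟩ : ∃ b, k = b + 1 := ⟨k-1, by omega⟩
    obtain ⟨a, rfl⟩ : ∃ a, n = a + b + 1 := ⟨n-(b+1), by omega⟩
    rw [show a+b+1-(b+1) = a by omega, show a+b+1+1-(b+1) = a+1 by omega,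
      show a+b+1+(b+1)+2 = a+2*b+4 by omega, show a+b+1+(b+1)+1 = a+2*b+3 by omega,
      show (b+1)+1 = b+2 by omega]
    rw [Nat.cast_choose ℝ (by omega : a ≤ a+b+1), Nat.cast_choose ℝ (by omega : b+2 ≤ a+2*b+4),
      Nat.cast_choose ℝ (by omega : a+1 ≤ a+b+1), Nat.cast_choose ℝ (by omega : b+1 ≤ a+2*b+3)]
    rw [show a+b+1-a = b+1 by omega, show a+2*b+4-(b+2) = a+b+2 by omega,
      show a+b+1-(a+1) = b by omega, show a+2*b+3-(b+1) = a+b+2 by omega]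
    rw [show a+2*b+4 = (a+2*b+3)+1 by omega, fact_step (a+2*b+3),
      show a+b+2 = (a+b+1)+1 by omega, fact_step (a+b+1),
      show b+2 = (b+1)+1 by omega, fact_step (b+1), fact_step b,
      show a+1 = a+1 by omega, fact_step a]
    have h1 := fact_ne a; have h2 := fact_ne b; have h3 := fact_ne (a+b+1)
    have h4 := fact_ne (a+2*b+3)
    have h5 : ((a:ℝ)+(b:ℝ)+1+2) ≠ 0 := by positivity
    push_cast
    field_simp
    all_goals first | ring | exact Or.inl trivial

lemma SB (n : ℕ) : ∀ k, k ≤ n+1 →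
    Tc (n+1) (n+1-k) / ((n:ℝ)+2)
      = ∑ i ∈ range k, (-1:ℝ)^(i+n) * ((n+i+1).factorial : ℝ)
          / (((n+1-i).factorial : ℝ) * (i.factorial : ℝ) * ((i+1).factorial : ℝ)) := by
  intro k
  induction k with
  | zero =>
    intro _
    rw [Nat.sub_zero]
    unfold Tc
    rw [show n+1-1 = n by omega, Nat.choose_succ_self]
    simp
  | succ k ih =>
    intro hk1
    rw [Finset.sum_range_succ, ← ih (by omega)]
    unfold Tc
    rw [show n+1-(k+1) = n-k by omega, show n+1-1 = n by omega,
      show 2*(n+1)-(n-k) = n+k+2 by omega, show n+1-(n-k) = k+1 by omega,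
      show 2*(n+1)-(n+1-k) = n+k+1 by omega, show n+1-(n+1-k) = k by omega]
    have s1 : (-1:ℝ)^(n-k) = (-1:ℝ)^(n+k) := by
      rw [show n+k = (n-k) + 2*k by omega, pow_add, pow_mul, neg_one_sq, one_pow, mul_one]
    have s2 : (-1:ℝ)^(n+1-k) = -(-1:ℝ)^(n+k) := by
      rw [show n+1-k = (n-k)+1 by omega, pow_succ, s1]
      ring
    have s3 : (-1:ℝ)^(k+n) = (-1:ℝ)^(n+k) := by rw [Nat.add_comm]
    rw [s1, s2, s3]
    have key := NAT1R n k (by omega)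
    linear_combination ((-1:ℝ)^(n+k)) * key

lemma sign_flip (n j : ℕ) (h : j ≤ n) : (-1:ℝ)^(n-j+n) = (-1:ℝ)^j := by
  rw [show n-j+n = j + 2*(n-j) by omega, pow_add, pow_mul, neg_one_sq, one_pow, mul_one]

lemma KEY (n k : ℕ) (hk : k ≤ n+1) (t : ℝ) :
    ∑ i ∈ range (n+1),
      (if i < k
        then ((-1:ℝ)^(i+n) / (((n+1-i).factorial : ℕ):ℝ)) *
          (phir i i 0 * (((n+i+1).factorial : ℕ):ℝ) / (((n+k+1).factorial : ℕ):ℝ) * t^(n+k+1))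
        else ((-1:ℝ)^(i+n) / (((n+1-i).factorial : ℕ):ℝ)) * Phif i k t)
      = Phif (n+1) k t := by
  have hsplit := Finset.sum_range_add_sum_Ico
    (fun i => (if i < k
        then ((-1:ℝ)^(i+n) / (((n+1-i).factorial : ℕ):ℝ)) *
          (phir i i 0 * (((n+i+1).factorial : ℕ):ℝ) / (((n+k+1).factorial : ℕ):ℝ) * t^(n+k+1))
        else ((-1:ℝ)^(i+n) / (((n+1-i).factorial : ℕ):ℝ)) * Phif i k t)) hk
  rw [← hsplit]
  have h1 : ∀ i ∈ range k, (if i < k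
        then ((-1:ℝ)^(i+n) / (((n+1-i).factorial : ℕ):ℝ)) *
          (phir i i 0 * (((n+i+1).factorial : ℕ):ℝ) / (((n+k+1).factorial : ℕ):ℝ) * t^(n+k+1))
        else ((-1:ℝ)^(i+n) / (((n+1-i).factorial : ℕ):ℝ)) * Phif i k t)
      = ((-1:ℝ)^(i+n) * (((n+i+1).factorial : ℕ):ℝ)
          / ((((n+1-i).factorial : ℕ):ℝ) * ((i.factorial : ℕ):ℝ) * (((i+1).factorial : ℕ):ℝ)))
        * (t^(n+k+1) / (((n+k+1).factorial : ℕ):ℝ)) := by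
    intro i hi
    rw [Finset.mem_range] at hi
    rw [if_pos hi, phir_ii i]
    have := fact_ne i; have := fact_ne (i+1); have := fact_ne (n+1-i); have := fact_ne (n+k+1)
    field_simp
    all_goals first | ring | exact Or.inl trivial
  have h2 : ∀ i ∈ Finset.Ico k (n+1), (if i < k
        then ((-1:ℝ)^(i+n) / (((n+1-i).factorial : ℕ):ℝ)) *
          (phir i i 0 * (((n+i+1).factorial : ℕ):ℝ) / (((n+k+1).factorial : ℕ):ℝ) * t^(n+k+1))
        else ((-1:ℝ)^(i+n) / (((n+1-i).factorial : ℕ):ℝ)) * Phif i k t)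
      = ((-1:ℝ)^(i+n) / (((n+1-i).factorial : ℕ):ℝ)) * Phif i k t := by
    intro i hi
    rw [Finset.mem_Ico] at hi
    rw [if_neg (by omega)]
  rw [Finset.sum_congr rfl h1, Finset.sum_congr rfl h2, ← Finset.sum_mul, ← SB n k hk,
    add_comm]
  show _ = ∑ l ∈ range (n+1-k+1), phir (n+1) k l * t^(n+1+k-l)
  rw [Finset.sum_range_succ']
  congr 1
  · -- Ico part = tail
    have hL : ∀ l' ∈ range (n+1-k), phir (n+1) k (l'+1) * t^(n+1+k-(l'+1))
        = ∑ j ∈ range (l'+1),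
            (-1:ℝ)^j / (((j+1).factorial : ℕ):ℝ) * phir (n-j) k (l'-j) * t^(n+k-l') := by
      intro l' hl'
      rw [Finset.mem_range] at hl'
      rw [Ll n k (l'+1) hk (by omega) (by omega), Finset.sum_mul]
      refine Finset.sum_congr rfl (fun j hj => ?_)
      rw [Finset.mem_range] at hj
      rw [show l'+1-1-j = l'-j by omega, show n+1+k-(l'+1) = n+k-l' by omega]
    have hR : ∀ i ∈ Finset.Ico k (n+1),
        ((-1:ℝ)^(i+n) / (((n+1-i).factorial : ℕ):ℝ)) * Phif i k t
        = ∑ l ∈ range (i-k+1),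
            ((-1:ℝ)^(i+n) / (((n+1-i).factorial : ℕ):ℝ)) * phir i k l * t^(i+k-l) := by
      intro i _
      unfold Phif
      rw [Finset.mul_sum]
      exact Finset.sum_congr rfl (fun l _ => by ring)
    rw [Finset.sum_congr rfl hL, Finset.sum_congr rfl hR]
    rw [Finset.sum_sigma' (range (n+1-k)) (fun l' => range (l'+1))
      (fun l' j => (-1:ℝ)^j / (((j+1).factorial : ℕ):ℝ) * phir (n-j) k (l'-j) * t^(n+k-l'))]
    rw [Finset.sum_sigma' (Finset.Ico k (n+1)) (fun i => range (i-k+1))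
      (fun i l => ((-1:ℝ)^(i+n) / (((n+1-i).factorial : ℕ):ℝ)) * phir i k l * t^(i+k-l))]
    refine Finset.sum_nbij' (fun p => ⟨p.2 + (n - p.1), n - p.1⟩) (fun p => ⟨n - p.2, p.1 - p.2⟩)
      ?_ ?_ ?_ ?_ ?_
    · rintro ⟨i, l⟩ hp
      simp only [Finset.mem_sigma, Finset.mem_range, Finset.mem_Ico] at hp ⊢
      omega
    · rintro ⟨l', j⟩ hp
      simp only [Finset.mem_sigma, Finset.mem_range, Finset.mem_Ico] at hp ⊢
      omega
    · rintro ⟨i, l⟩ hp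
      simp only [Finset.mem_sigma, Finset.mem_range, Finset.mem_Ico] at hp
      have e1 : n - (n - i) = i := by omega
      have e2 : l + (n - i) - (n - i) = l := by omega
      simp only [e1, e2]
    · rintro ⟨l', j⟩ hp
      simp only [Finset.mem_sigma, Finset.mem_range] at hp
      have e1 : n - (n - j) = j := by omega
      simp only [e1]
      rw [show l' - j + j = l' by omega]
    · rintro ⟨i, l⟩ hp
      simp only [Finset.mem_sigma, Finset.mem_range, Finset.mem_Ico] at hp
      obtain ⟨h1', h2'⟩ := hp
      simp only []
      rw [show n - (n-i) = i by omega, show l + (n-i) - (n-i) = l by omega,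
        show n + k - (l + (n-i)) = i+k-l by omega, show (n-i)+1 = n+1-i by omega]
      have hs : (-1:ℝ)^(n-(n-i)+n) = (-1:ℝ)^(n-i) := sign_flip n (n-i) (by omega)
      rw [show n-(n-i) = i by omega] at hs
      rw [← hs]
  · -- head
    have h1 := fact_ne (n+k+1)
    have h2 : ((n:ℝ)+2) ≠ 0 := by positivity
    unfold phir
    rw [show n+1-0 = n+1 by omega, show n+1-k-0 = n+1-k by omega,
      show n+1+k-0 = n+k+1 by omega]
    rw [show ((n+1+1 : ℕ):ℝ) = ((n:ℝ)+2) by push_cast; ring]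
    simp only [Nat.factorial_zero, Nat.cast_one, one_mul]
    rw [div_mul_div_comm, div_mul_eq_mul_div,
      mul_comm ((((n+k+1).factorial : ℕ)) : ℝ) ((n:ℝ)+2)]

theorem MAIN : ∀ n k, k ≤ n → RepP k (fun u => S n (pad k n u)) (Phif n k) := by
  intro n
  induction n using Nat.strong_induction_on with
  | _ n IH =>
    match n with
    | 0 =>
      intro k hk
      have hk0 : k = 0 := Nat.le_zero.mp hk
      subst hk0
      intro x
      show Phif 0 0 x = _
      simp only [S]
      unfold Phif
      rw [Finset.sum_range_one, phir_ii 0]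
      norm_num [Nat.factorial]
    | (n+1) =>
      intro k hk
      -- the summand family
      set F : Fin (n+1) → (Fin k → ℝ) → ℝ := fun i u =>
        (-1 : ℝ) ^ ((i : ℕ) + n) * (pad k (n+1) u) i ^ (n + 1 - (i : ℕ)) /
          (Nat.factorial (n + 1 - (i : ℕ)))
        * S i (fun j => (pad k (n+1) u) (Fin.castLE i.isLt.le j)) with hF
      set Pf : Fin (n+1) → ℝ → ℝ := fun i t =>
        if (i:ℕ) < k
        then ((-1:ℝ)^((i:ℕ)+n) / (((n+1-(i:ℕ)).factorial : ℕ):ℝ)) *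
          (phir i i 0 * (((n+(i:ℕ)+1).factorial : ℕ):ℝ) / (((n+k+1).factorial : ℕ):ℝ)
            * t^(n+k+1))
        else ((-1:ℝ)^((i:ℕ)+n) / (((n+1-(i:ℕ)).factorial : ℕ):ℝ)) * Phif i k t with hPf
      have hterm : ∀ i ∈ (Finset.univ : Finset (Fin (n+1))), RepP k (F i) (Pf i) := by
        intro i _
        by_cases hik : (i:ℕ) < k
        · -- main branch : i < k
          have hi_le : (i:ℕ) ≤ n := by omega
          have h0 := IH i (by omega) i le_rfl
          have h1 : RepP (i:ℕ) (S i) (Phif i i) := by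
            refine h0.congr (fun v => ?_)
            congr 1
            funext j
            show (if h : (j:ℕ) < (i:ℕ) then v ⟨j, h⟩ else 1) = v j
            rw [dif_pos j.isLt]
          have h2 := h1.lastPow (n+1-(i:ℕ))
          have h3 : RepP ((i:ℕ)+1)
              (fun v => v (Fin.last (i:ℕ))^(n+1-(i:ℕ)) * S i (Fin.init v))
              (fun t => (phir i i 0 / (((n+(i:ℕ)+2 : ℕ)):ℝ))
                * t^(n+(i:ℕ)+2)) := by
            refine h2.congrP (fun t => ?_)
            have hint : ∀ x ∈ Set.uIcc (0:ℝ) t,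
                x^(n+1-(i:ℕ)) * Phif i i x = phir i i 0 * x^(n+(i:ℕ)+1) := by
              intro x _
              unfold Phif
              rw [Nat.sub_self, Finset.sum_range_one]
              rw [show (i:ℕ)+(i:ℕ)-0 = (i:ℕ)+(i:ℕ) by omega]
              rw [show n+(i:ℕ)+1 = (n+1-(i:ℕ)) + ((i:ℕ)+(i:ℕ)) by omega, pow_add]
              ring
            rw [intervalIntegral.integral_congr hint, integral_monomial]
            rw [show n+(i:ℕ)+2 = (n+(i:ℕ)+1)+1 by omega]
            push_cast
            ring
          have h4 := h3.liftP 1 (fun _ => phir i i 0 / (((n+(i:ℕ)+2 : ℕ)):ℝ))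
            (fun _ => n+(i:ℕ)+2)
            (fun t => by rw [Finset.sum_range_one]) k (by omega)
          simp only [hF, hPf, if_pos hik]
          refine ((h4.smul ((-1:ℝ)^((i:ℕ)+n) / (((n+1-(i:ℕ)).factorial : ℕ):ℝ))).congr
            ?_).congrP ?_
          · intro u
            simp only []
            have harg1 : ∀ (h' : (i:ℕ)+1 ≤ k),
                u (Fin.castLE h' (Fin.last (i:ℕ))) = pad k (n+1) u i := by
              intro h'
              rw [show pad k (n+1) u i = u ⟨(i:ℕ), hik⟩ from dif_pos hik]
              rfl
            have harg2 : ∀ (h' : (i:ℕ)+1 ≤ k),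
                S i (Fin.init (fun s => u (Fin.castLE h' s)))
                = S i (fun j => (pad k (n+1) u) (Fin.castLE i.isLt.le j)) := by
              intro h'
              congr 1
              funext j
              show u _ = (if h : (j:ℕ) < k then u ⟨j, h⟩ else 1)
              rw [dif_pos (by omega : (j:ℕ) < k)]
              rfl
            rw [harg1, harg2]
            ring
          · intro t
            rw [Finset.sum_range_one]
            have e1 : n+(i:ℕ)+2+(k-((i:ℕ)+1)) = n+k+1 := by omega
            rw [e1]
            rw [show (((n+(i:ℕ)+2).factorial : ℕ):ℝ)
                = ((n+(i:ℕ)+2 : ℕ):ℝ) * (((n+(i:ℕ)+1).factorial : ℕ):ℝ)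
              from by rw [show n+(i:ℕ)+2 = (n+(i:ℕ)+1)+1 by omega, Nat.factorial_succ]; push_cast; ring]
            have h5 : (((n+(i:ℕ)+2 : ℕ)):ℝ) ≠ 0 := by positivity
            have h6 := fact_ne (n+(i:ℕ)+1)
            have h7 := fact_ne (n+k+1)
            field_simp
        · -- branch i ≥ k
          have h0 := IH i (by omega) k (by omega)
          simp only [hF, hPf, if_neg hik]
          refine (h0.smul ((-1:ℝ)^((i:ℕ)+n) / (((n+1-(i:ℕ)).factorial : ℕ):ℝ))).congr
            (fun u => ?_)
          have harg : (fun j => (pad k (n+1) u) (Fin.castLE i.isLt.le j)) = pad k (i:ℕ) u := by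
            funext j
            show (if h : (j:ℕ) < k then u ⟨j, h⟩ else 1) = (if h : (j:ℕ) < k then u ⟨j, h⟩ else 1)
            rfl
          rw [harg, show pad k (n+1) u i = 1 from dif_neg hik, one_pow]
          ring
      have hsum := RepP.sum (Finset.univ : Finset (Fin (n+1))) F Pf hterm
      refine (hsum.congr (fun u => ?_)).congrP (fun t => ?_)
      · show _ = S (n+1) (pad k (n+1) u)
        simp only [S, hF]
      · have : ∑ i : Fin (n+1), Pf i t = ∑ i ∈ range (n+1),
            (if i < k
              then ((-1:ℝ)^(i+n) / (((n+1-i).factorial : ℕ):ℝ)) *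
                (phir i i 0 * (((n+i+1).factorial : ℕ):ℝ) / (((n+k+1).factorial : ℕ):ℝ)
                  * t^(n+k+1))
              else ((-1:ℝ)^(i+n) / (((n+1-i).factorial : ℕ):ℝ)) * Phif i k t) := by
          rw [← Fin.sum_univ_eq_sum_range]
        rw [this, KEY n k hk t]

theorem stmt6 (n m : ℕ) (hn : 1 ≤ n) (hm : 1 ≤ m) (hmn : m ≤ n)
    (t : ℝ) (ht : t ∈ Set.Icc (0 : ℝ) 1) :
    iterInt n (Snm n m) t
      = ∑ l ∈ Finset.range (m + 1),
          t ^ (2 * n - l) / (Nat.factorial (2 * n) : ℝ) *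
            (1 / ((n - l + 1 : ℕ) : ℝ)) * (Nat.choose (2 * n) l : ℝ) *
            ∑ h ∈ Finset.range (m - l + 1),
              (-1 : ℝ) ^ h * (Nat.choose (2 * n - 2 * l - h) (n - l) : ℝ) *
                (Nat.choose (n - l + 1) h : ℝ) := by
  have h0 := MAIN n (n-m) (by omega)
  have h1 := h0.liftP (n-(n-m)+1) (fun l => phir n (n-m) l) (fun l => n+(n-m)-l)
    (fun t => by unfold Phif; rfl) n (by omega)
  have h2 : RepP n (Snm n m)
      (fun t => ∑ l ∈ range (n-(n-m)+1),
        phir n (n-m) l *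
          ((((n+(n-m)-l).factorial : ℕ):ℝ) / (((n+(n-m)-l+(n-(n-m))).factorial : ℕ):ℝ)) *
          t ^ (n+(n-m)-l+(n-(n-m)))) := by
    refine h1.congr (fun u => ?_)
    unfold Snm
    congr 1
  rw [h2.eval t]
  rw [show n-(n-m) = m by omega]
  refine Finset.sum_congr rfl (fun l hl => ?_)
  rw [Finset.mem_range] at hl
  have hin : ∑ h ∈ Finset.range (m - l + 1),
      (-1 : ℝ) ^ h * (Nat.choose (2 * n - 2 * l - h) (n - l) : ℝ) *
        (Nat.choose (n - l + 1) h : ℝ) = Tc (n-l) (m-l) := by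
    rw [← TA (n-l) (m-l) (by omega)]
    refine Finset.sum_congr rfl (fun h hh => ?_)
    rw [Finset.mem_range] at hh
    rw [show 2*n-2*l-h = 2*(n-l)-h by omega]
  rw [hin]
  unfold phir
  rw [show n-(n-m)-l = m-l by omega, show n+(n-m)-l+m = 2*n-l by omega,
    show n+(n-m)-l = 2*n-m-l by omega]
  rw [Nat.cast_choose ℝ (by omega : l ≤ 2*n)]
  have f1 := fact_ne l; have f2 := fact_ne (2*n-m-l); have f3 := fact_ne (2*n-l)
  have f4 := fact_ne (2*n)
  have f5 : (((n-l+1 : ℕ)):ℝ) ≠ 0 := by positivity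
  field_simp
end

section
/- Let X_1,...,X_d be i.i.d. random variables uniformly distributed on [0,1], and let X_{1:d} ≤ ··· ≤ X_{d:d} be their order statistics. Then E[F_T(X_{1:d},...,X_{d:d})] = 1/(d+1), where F_T is the joint distribution function of (X_{1:d},...,X_{d:d}). -/
open MeasureTheory Finset DyckStep
open scoped ENNReal

/-- The uniform distribution on `[0,1]`. -/
noncomputable def unif : Measure ℝ := volume.restrict (Set.Icc 0 1)

/-- The joint distribution of `d` i.i.d. uniform `[0,1]` random variables. -/
noncomputable def unifPi (d : ℕ) : Measure (Fin d → ℝ) :=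
  Measure.pi fun _ => unif

/-- The sorting (order statistic) map: `sortVec x` is the nondecreasing
rearrangement of the vector `x`. -/
noncomputable def sortVec {d : ℕ} (x : Fin d → ℝ) : Fin d → ℝ :=
  x ∘ Tuple.sort x

/-- The joint distribution function of the order statistic of `d` i.i.d.
uniform `[0,1]` random variables. -/
noncomputable def FT (d : ℕ) (x : Fin d → ℝ) : ℝ :=
  (((unifPi d).map sortVec) {y | ∀ i, y i ≤ x i}).toReal

namespace OSAux


def Good (n : ℕ) (w : Fin n → Bool) : Prop :=
  ∀ m : ℕ, (Finset.univ.filter fun k : Fin n => (k : ℕ) < m ∧ w k = false).card ≤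
    (Finset.univ.filter fun k : Fin n => (k : ℕ) < m ∧ w k = true).card

theorem count_take_ofFn {α : Type*} [DecidableEq α] :
    ∀ (n : ℕ) (g : Fin n → α) (s : α) (m : ℕ),
      ((List.ofFn g).take m).count s
        = (Finset.univ.filter fun k : Fin n => (k : ℕ) < m ∧ g k = s).card := by
  intro n
  induction n with
  | zero => intro g s m; simp
  | succ n ih =>
    intro g s m
    cases m with
    | zero => simp
    | succ m =>
      rw [List.ofFn_succ, List.take_succ_cons, List.count_cons]
      rw [ih (fun k => g k.succ) s m]
      rw [Finset.card_filter, Finset.card_filter, Fin.sum_univ_succ]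
      simp only [Fin.val_zero, Fin.val_succ, beq_iff_eq]
      have h0 : ((0 : ℕ) < m + 1 ∧ g 0 = s) ↔ g 0 = s := by simp
      have h1 : ∀ k : ℕ, (k + 1 < m + 1) ↔ k < m := by intro k; omega
      simp only [h1]
      rw [add_comm]
      congr 1
      simp [h0]

theorem count_ofFn {α : Type*} [DecidableEq α] (n : ℕ) (g : Fin n → α) (s : α) :
    (List.ofFn g).count s = (Finset.univ.filter fun k : Fin n => g k = s).card := by
  have := count_take_ofFn n g s n
  rw [List.take_of_length_le (by simp)] at this
  rw [this]
  congr 1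
  apply Finset.filter_congr
  intro k _
  simp [k.isLt]

/-- the Dyck-step list of a boolean word: `true ↦ U`. -/
def toDW {n : ℕ} (w : Fin n → Bool) : List DyckStep :=
  List.ofFn (fun k => if w k then U else D)

theorem toDW_take_count_U {n : ℕ} (w : Fin n → Bool) (m : ℕ) :
    ((toDW w).take m).count U
      = (Finset.univ.filter fun k : Fin n => (k : ℕ) < m ∧ w k = true).card := by
  rw [toDW, count_take_ofFn]
  congr 1
  apply Finset.filter_congr
  intro k _
  cases h : w k <;> simp [h]

theorem toDW_take_count_D {n : ℕ} (w : Fin n → Bool) (m : ℕ) :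
    ((toDW w).take m).count D
      = (Finset.univ.filter fun k : Fin n => (k : ℕ) < m ∧ w k = false).card := by
  rw [toDW, count_take_ofFn]
  congr 1
  apply Finset.filter_congr
  intro k _
  cases h : w k <;> simp [h]

theorem toDW_count_U {n : ℕ} (w : Fin n → Bool) :
    (toDW w).count U = (Finset.univ.filter fun k : Fin n => w k = true).card := by
  rw [toDW, count_ofFn]
  congr 1
  apply Finset.filter_congr
  intro k _
  cases h : w k <;> simp [h]

theorem toDW_count_D {n : ℕ} (w : Fin n → Bool) :
    (toDW w).count D = (Finset.univ.filter fun k : Fin n => w k = false).card := by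
  rw [toDW, count_ofFn]
  congr 1
  apply Finset.filter_congr
  intro k _
  cases h : w k <;> simp [h]

theorem card_true_add_card_false {n : ℕ} (w : Fin n → Bool) :
    (Finset.univ.filter fun k : Fin n => w k = true).card
      + (Finset.univ.filter fun k : Fin n => w k = false).card = n := by
  have := Finset.card_filter_add_card_filter_not
    (s := (Finset.univ : Finset (Fin n))) (p := fun k => w k = true)
  simp only [Bool.not_eq_true] at this
  simpa using this

/-- forward map to Dyck words -/
def fwd (d : ℕ) (w : {w : Fin (d + d) → Bool //
    Good (d + d) w ∧ (Finset.univ.filter fun k => w k = true).card = d}) :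
    {p : DyckWord // p.semilength = d} := by
  refine ⟨⟨toDW w.1, ?_, ?_⟩, ?_⟩
  · rw [toDW_count_U, toDW_count_D, w.2.2]
    have := card_true_add_card_false w.1
    omega
  · intro m
    rw [toDW_take_count_U, toDW_take_count_D]
    exact w.2.1 m
  · show (toDW w.1).count U = d
    rw [toDW_count_U, w.2.2]

theorem dw_length {d : ℕ} (p : {p : DyckWord // p.semilength = d}) :
    p.1.toList.length = d + d := by
  have := p.1.two_mul_semilength_eq_length
  rw [p.2] at this
  omega

/-- backward: word from a Dyck word -/
def bwdW (d : ℕ) (p : {p : DyckWord // p.semilength = d}) : Fin (d + d) → Bool :=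
  fun k => decide (p.1.toList[(k : ℕ)]'(by rw [dw_length p]; exact k.isLt) = U)

theorem toDW_bwdW (d : ℕ) (p : {p : DyckWord // p.semilength = d}) :
    toDW (bwdW d p) = p.1.toList := by
  apply List.ext_getElem
  · simp [toDW, dw_length p]
  · intro i h1 h2
    simp only [toDW, List.getElem_ofFn, bwdW]
    rcases (p.1.toList[i]'h2).dichotomy with h | h <;> simp [h]

def bwd (d : ℕ) (p : {p : DyckWord // p.semilength = d}) :
    {w : Fin (d + d) → Bool //
      Good (d + d) w ∧ (Finset.univ.filter fun k => w k = true).card = d} := by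
  refine ⟨bwdW d p, ?_, ?_⟩
  · intro m
    rw [← toDW_take_count_U, ← toDW_take_count_D, toDW_bwdW]
    exact p.1.count_D_le_count_U m
  · rw [← toDW_count_U, toDW_bwdW]
    exact p.2

/-- the equivalence between good balanced words and Dyck words -/
def wordEquiv (d : ℕ) :
    {w : Fin (d + d) → Bool //
      Good (d + d) w ∧ (Finset.univ.filter fun k => w k = true).card = d}
    ≃ {p : DyckWord // p.semilength = d} where
  toFun := fwd d
  invFun := bwd d
  left_inv w := by
    apply Subtype.ext
    funext k
    show bwdW d (fwd d w) k = w.1 k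
    unfold bwdW fwd
    cases h : w.1 k <;> simp [toDW, h]
  right_inv p := by
    apply Subtype.ext
    apply DyckWord.ext
    exact toDW_bwdW d p



theorem monotone_sortVec {d : ℕ} (x : Fin d → ℝ) : Monotone (sortVec x) :=
  Tuple.monotone_sort x

/-- key characterization: the `i`-th order statistic is `≤ t` iff at least `i+1`
coordinates are `≤ t`. -/
theorem sortVec_le_iff {d : ℕ} (x : Fin d → ℝ) (t : ℝ) (i : Fin d) :
    sortVec x i ≤ t ↔ (i : ℕ) < Fintype.card {j : Fin d // x j ≤ t} := by
  have h := Tuple.lt_card_le_iff_apply_le_of_monotone (f := sortVec x) (a := t) (j := i) (monotone_sortVec x)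
  rw [← Fintype.card_subtype] at h
  rw [← h]
  have : Fintype.card {j : Fin d // sortVec x j ≤ t} = Fintype.card {j : Fin d // x j ≤ t} := by
    apply Fintype.card_congr
    exact (Tuple.sort x).subtypeEquiv (fun j => Iff.rfl)
  rw [this]

theorem measurable_sortVec {d : ℕ} : Measurable (sortVec : (Fin d → ℝ) → (Fin d → ℝ)) := by
  apply measurable_pi_lambda
  intro i
  apply measurable_of_Iic
  intro t
  have : (fun x : Fin d → ℝ => sortVec x i) ⁻¹' Set.Iic t
      = ⋃ (S : Finset (Fin d)) (_ : (i : ℕ) < S.card), ⋂ j ∈ S, {x : Fin d → ℝ | x j ≤ t} := by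
    ext x
    simp only [Set.mem_preimage, Set.mem_Iic, Set.mem_iUnion, Set.mem_iInter, Set.mem_setOf_eq]
    rw [sortVec_le_iff, Fintype.card_subtype]
    constructor
    · intro h
      exact ⟨Finset.univ.filter fun j => x j ≤ t, h, fun j hj => (Finset.mem_filter.mp hj).2⟩
    · rintro ⟨S, hS, hmem⟩
      exact lt_of_lt_of_le hS (Finset.card_le_card fun j hj => Finset.mem_filter.mpr
        ⟨Finset.mem_univ j, hmem j hj⟩)
  rw [this]
  apply MeasurableSet.iUnion
  intro S
  apply MeasurableSet.iUnion
  intro _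
  apply MeasurableSet.biInter (S : Set (Fin d)).to_countable
  intro j _
  exact measurableSet_le (measurable_pi_apply j) measurable_const

/-- two-vector characterization via counts -/
theorem sorted_dom_iff_counts {d : ℕ} (x y : Fin d → ℝ) :
    (∀ i, sortVec y i ≤ sortVec x i)
      ↔ ∀ t : ℝ, Fintype.card {j : Fin d // x j ≤ t} ≤ Fintype.card {j : Fin d // y j ≤ t} := by
  constructor
  · intro h t
    set k := Fintype.card {j : Fin d // x j ≤ t} with hk
    rcases Nat.eq_zero_or_pos k with h0 | h0
    · omega
    · have hkd : k ≤ d := by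
        rw [hk]
        simpa using Fintype.card_subtype_le (fun j : Fin d => x j ≤ t)
      set i : Fin d := ⟨k - 1, by omega⟩ with hi
      have hx : sortVec x i ≤ t := (sortVec_le_iff x t i).mpr (by simp [hi]; omega)
      have hy : sortVec y i ≤ t := le_trans (h i) hx
      have := (sortVec_le_iff y t i).mp hy
      simp only [hi] at this
      omega
  · intro h i
    have hx : sortVec x i ≤ sortVec x i := le_rfl
    have := (sortVec_le_iff x (sortVec x i) i).mp hx
    have := lt_of_lt_of_le this (h (sortVec x i))
    exact (sortVec_le_iff y (sortVec x i) i).mpr this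


section cellsD


variable {d : ℕ}

/-- the cell of vectors strictly increasing along the ordering `e` -/
def cell (e : Fin (d + d) ≃ (Fin d ⊕ Fin d)) : Set ((Fin d ⊕ Fin d) → ℝ) :=
  {z | StrictMono (z ∘ e)}

def wrd (e : Fin (d + d) ≃ (Fin d ⊕ Fin d)) : Fin (d + d) → Bool :=
  fun k => (e k).isRight

def Bset (d : ℕ) : Set ((Fin d ⊕ Fin d) → ℝ) :=
  {z | ∀ i, sortVec (fun j => z (.inr j)) i ≤ sortVec (fun j => z (.inl j)) i}

theorem measurableSet_cell (e : Fin (d + d) ≃ (Fin d ⊕ Fin d)) :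
    MeasurableSet (cell e) := by
  have : cell e = ⋂ (k : Fin (d + d)) (k' : Fin (d + d)) (_ : k < k'),
      {z : (Fin d ⊕ Fin d) → ℝ | z (e k) < z (e k')} := by
    ext z
    simp only [cell, Set.mem_setOf_eq, Set.mem_iInter]
    exact ⟨fun h k k' hkk => h hkk, fun h a b hab => h a b hab⟩
  rw [this]
  exact MeasurableSet.iInter fun k => MeasurableSet.iInter fun k' => MeasurableSet.iInter
    fun _ => measurableSet_lt (measurable_pi_apply _) (measurable_pi_apply _)

theorem measurableSet_Bset : MeasurableSet (Bset d) := by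
  have : Bset d = ⋂ i : Fin d, {z : (Fin d ⊕ Fin d) → ℝ |
      sortVec (fun j => z (.inr j)) i ≤ sortVec (fun j => z (.inl j)) i} := by
    ext z; simp [Bset]
  rw [this]
  have hR : Measurable (fun z : (Fin d ⊕ Fin d) → ℝ => sortVec (fun j => z (.inr j))) :=
    measurable_sortVec.comp (measurable_pi_lambda _ fun j => measurable_pi_apply _)
  have hL : Measurable (fun z : (Fin d ⊕ Fin d) → ℝ => sortVec (fun j => z (.inl j))) :=
    measurable_sortVec.comp (measurable_pi_lambda _ fun j => measurable_pi_apply _)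
  exact MeasurableSet.iInter fun i => measurableSet_le (hR.eval) (hL.eval)

theorem cell_injective {e : Fin (d + d) ≃ (Fin d ⊕ Fin d)} {z : (Fin d ⊕ Fin d) → ℝ}
    (hz : z ∈ cell e) : Function.Injective z := by
  have h1 : Function.Injective (z ∘ e) := hz.injective
  intro a b hab
  have h2 : z (e (e.symm a)) = z (e (e.symm b)) := by simpa using hab
  have := h1 h2
  have := congrArg e this
  simpa using this

theorem cell_disjoint {e e' : Fin (d + d) ≃ (Fin d ⊕ Fin d)} (h : e ≠ e') :
    Disjoint (cell e) (cell e') := by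
  rw [Set.disjoint_left]
  intro z hz hz'
  apply h
  have hinj : Function.Injective z := cell_injective hz
  have : (z ∘ e) = (z ∘ e') := by
    apply (StrictMono.range_inj hz hz').mp
    rw [Set.range_comp, Set.range_comp, Equiv.range_eq_univ, Equiv.range_eq_univ]
  ext k
  exact hinj (congrFun this k)

theorem cell_cover {z : (Fin d ⊕ Fin d) → ℝ} (hz : Function.Injective z) :
    ∃ e, z ∈ cell e := by
  set g : Fin (d + d) ≃ (Fin d ⊕ Fin d) := finSumFinEquiv.symm
  set f : Fin (d + d) → ℝ := z ∘ g
  set σ := Tuple.sort f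
  refine ⟨(σ : Fin (d+d) ≃ Fin (d+d)).trans g, ?_⟩
  have : z ∘ ((σ : Fin (d+d) ≃ Fin (d+d)).trans g) = f ∘ σ := rfl
  show StrictMono (z ∘ ((σ : Fin (d+d) ≃ Fin (d+d)).trans g))
  rw [this]
  apply (Tuple.monotone_sort f).strictMono_of_injective
  exact (hz.comp g.injective).comp σ.injective

/-- subtype equivalence for left injections -/
def sumSubtypeLeft {A B : Type*} (P : A ⊕ B → Prop) :
    {j : A // P (.inl j)} ≃ {s : A ⊕ B // P s ∧ s.isRight = false} where
  toFun j := ⟨.inl j.1, j.2, rfl⟩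
  invFun s := match s with
    | ⟨.inl j, h⟩ => ⟨j, h.1⟩
    | ⟨.inr _, h⟩ => absurd h.2 (by simp)
  left_inv j := rfl
  right_inv s := by
    rcases s with ⟨s | s, h⟩
    · rfl
    · exact absurd h.2 (by simp)

/-- subtype equivalence for right injections -/
def sumSubtypeRight {A B : Type*} (P : A ⊕ B → Prop) :
    {j : B // P (.inr j)} ≃ {s : A ⊕ B // P s ∧ s.isRight = true} where
  toFun j := ⟨.inr j.1, j.2, rfl⟩
  invFun s := match s with
    | ⟨.inr j, h⟩ => ⟨j, h.1⟩
    | ⟨.inl _, h⟩ => absurd h.2 (by simp)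
  left_inv j := rfl
  right_inv s := by
    rcases s with ⟨s | s, h⟩
    · exact absurd h.2 (by simp)
    · rfl

theorem count_left (e : Fin (d + d) ≃ (Fin d ⊕ Fin d)) (z : (Fin d ⊕ Fin d) → ℝ)
    (P : ℝ → Prop) [DecidablePred P] :
    Fintype.card {j : Fin d // P (z (.inl j))}
      = (Finset.univ.filter fun k : Fin (d + d) => P (z (e k)) ∧ wrd e k = false).card := by
  rw [← Fintype.card_subtype]
  apply Fintype.card_congr
  exact (sumSubtypeLeft (fun s => P (z s))).trans
    ((e.subtypeEquiv (fun k => Iff.rfl)).symm)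

theorem count_right (e : Fin (d + d) ≃ (Fin d ⊕ Fin d)) (z : (Fin d ⊕ Fin d) → ℝ)
    (P : ℝ → Prop) [DecidablePred P] :
    Fintype.card {j : Fin d // P (z (.inr j))}
      = (Finset.univ.filter fun k : Fin (d + d) => P (z (e k)) ∧ wrd e k = true).card := by
  rw [← Fintype.card_subtype]
  apply Fintype.card_congr
  exact (sumSubtypeRight (fun s => P (z s))).trans
    ((e.subtypeEquiv (fun k => Iff.rfl)).symm)

/-- in a cell, membership of `Bset` is equivalent to goodness of the word. -/
theorem cell_mem_Bset_iff {e : Fin (d + d) ≃ (Fin d ⊕ Fin d)} {z : (Fin d ⊕ Fin d) → ℝ}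
    (hz : z ∈ cell e) : z ∈ Bset d ↔ Good (d + d) (wrd e) := by
  classical
  have hs : StrictMono (z ∘ e) := hz
  rw [Bset, Set.mem_setOf_eq, sorted_dom_iff_counts]
  constructor
  · -- counts → Good
    intro h m
    rcases Nat.eq_zero_or_pos m with rfl | hm
    · simp
    rcases Nat.eq_zero_or_pos (d + d) with hdd | hdd
    · have : ∀ (b : Bool), (Finset.univ.filter
          fun k : Fin (d + d) => (k : ℕ) < m ∧ wrd e k = b) = ∅ := by
        intro b
        apply Finset.eq_empty_of_forall_notMem
        intro k
        have := k.isLt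
        omega
      rw [this true, this false]
    set m' := min m (d + d) with hm'
    have hm'1 : 1 ≤ m' := by omega
    set k0 : Fin (d + d) := ⟨m' - 1, by omega⟩ with hk0
    set t := z (e k0) with ht
    have hiff : ∀ k : Fin (d + d), z (e k) ≤ t ↔ (k : ℕ) < m := by
      intro k
      rw [ht]
      have : z (e k) ≤ z (e k0) ↔ k ≤ k0 := hs.le_iff_le
      rw [this]
      show (k : ℕ) ≤ (k0 : ℕ) ↔ _
      rw [hk0]
      have := k.isLt
      simp only []
      omega
    have hcount := h t
    rw [count_left e z (fun r => r ≤ t), count_right e z (fun r => r ≤ t)] at hcount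
    have congr1 : ∀ b : Bool, (Finset.univ.filter
        fun k : Fin (d + d) => z (e k) ≤ t ∧ wrd e k = b)
        = (Finset.univ.filter fun k : Fin (d + d) => (k : ℕ) < m ∧ wrd e k = b) := by
      intro b
      apply Finset.filter_congr
      intro k _
      rw [hiff k]
    rwa [congr1 true, congr1 false] at hcount
  · -- Good → counts
    intro hg t
    rw [count_left e z (fun r => r ≤ t), count_right e z (fun r => r ≤ t)]
    set F := Finset.univ.filter fun k : Fin (d + d) => z (e k) ≤ t with hF
    rcases F.eq_empty_or_nonempty with hFe | hFne
    · have : (Finset.univ.filter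
          fun k : Fin (d + d) => z (e k) ≤ t ∧ wrd e k = false) = ∅ := by
        rw [← Finset.subset_empty, ← hFe, hF]
        intro k hk
        rw [Finset.mem_filter] at hk ⊢
        exact ⟨hk.1, hk.2.1⟩
      rw [this]
      simp
    · set k0 := F.max' hFne with hk0
      have hk0F : k0 ∈ F := F.max'_mem hFne
      have hk0t : z (e k0) ≤ t := by
        rw [hF] at hk0F
        exact (Finset.mem_filter.mp hk0F).2
      have hiff : ∀ k : Fin (d + d), z (e k) ≤ t ↔ (k : ℕ) < (k0 : ℕ) + 1 := by
        intro k
        constructor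
        · intro hk
          have : k ∈ F := by rw [hF]; exact Finset.mem_filter.mpr ⟨Finset.mem_univ _, hk⟩
          have := F.le_max' k this
          omega
        · intro hk
          have hkk0 : k ≤ k0 := by
            show (k : ℕ) ≤ (k0 : ℕ); omega
          exact le_trans (hs.monotone (by exact_mod_cast hkk0)) hk0t
      have congr1 : ∀ b : Bool, (Finset.univ.filter
          fun k : Fin (d + d) => z (e k) ≤ t ∧ wrd e k = b)
          = (Finset.univ.filter fun k : Fin (d + d) => (k : ℕ) < (k0 : ℕ) + 1 ∧ wrd e k = b) := by
        intro b
        apply Finset.filter_congr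
        intro k _
        rw [hiff k]
      rw [congr1 true, congr1 false]
      exact hg ((k0 : ℕ) + 1)

end cellsD


section fibers

variable {d : ℕ}

theorem getRight_eq_of {A B : Type*} {x : A ⊕ B} {j : B} (hx : x = .inr j) (h) :
    x.getRight h = j := by subst hx; rfl

theorem getLeft_eq_of {A B : Type*} {x : A ⊕ B} {j : A} (hx : x = .inl j) (h) :
    x.getLeft h = j := by subst hx; rfl

def rightEquiv {A B : Type*} : {s : A ⊕ B // s.isRight = true} ≃ B where
  toFun s := s.1.getRight s.2
  invFun b := ⟨.inr b, rfl⟩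
  left_inv s := by
    rcases s with ⟨s | s, h⟩
    · simp at h
    · rfl
  right_inv b := rfl

def leftEquiv {A B : Type*} : {s : A ⊕ B // s.isRight = false} ≃ A where
  toFun s := s.1.getLeft (by
    rcases s with ⟨s | s, h⟩
    · rfl
    · exact absurd h (by simp))
  invFun a := ⟨.inl a, rfl⟩
  left_inv s := by
    rcases s with ⟨s | s, h⟩
    · rfl
    · exact absurd h (by simp)
  right_inv a := rfl

theorem card_wrd_true (e : Fin (d + d) ≃ (Fin d ⊕ Fin d)) :
    (Finset.univ.filter fun k => wrd e k = true).card = d := by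
  rw [← Fintype.card_subtype]
  have h : Fintype.card {k // wrd e k = true} = Fintype.card (Fin d) :=
    Fintype.card_congr ((e.subtypeEquiv (fun k => Iff.rfl)).trans rightEquiv)
  simpa using h

/-- building an ordering equiv from a word and two bijections -/
def mkE (w : Fin (d + d) → Bool) (b : {k // w k = true} ≃ Fin d)
    (a : {k // w k = false} ≃ Fin d) : Fin (d + d) ≃ (Fin d ⊕ Fin d) where
  toFun k := if h : w k = true then .inr (b ⟨k, h⟩)
    else .inl (a ⟨k, by rwa [Bool.not_eq_true] at h⟩)
  invFun s := Sum.elim (fun j => ((a.symm j) : Fin (d + d)))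
    (fun j => ((b.symm j) : Fin (d + d))) s
  left_inv k := by
    by_cases h : w k = true
    · simp only [dif_pos h, Sum.elim_inr, Equiv.symm_apply_apply]
    · simp only [dif_neg h, Sum.elim_inl, Equiv.symm_apply_apply]
  right_inv s := by
    rcases s with j | j
    · have h : w ((a.symm j) : Fin (d + d)) = false := (a.symm j).2
      simp only [Sum.elim_inl]
      erw [dif_neg (by simp [h] : ¬ w ((a.symm j) : Fin (d + d)) = true)]
      congr 1
      rw [Subtype.coe_eta]
      exact a.apply_symm_apply j
    · have h : w ((b.symm j) : Fin (d + d)) = true := (b.symm j).2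
      simp only [Sum.elim_inr]
      erw [dif_pos h]
      congr 1
      rw [Subtype.coe_eta]
      exact b.apply_symm_apply j

theorem wrd_mkE (w : Fin (d + d) → Bool) (b : {k // w k = true} ≃ Fin d)
    (a : {k // w k = false} ≃ Fin d) : wrd (mkE w b a) = w := by
  funext k
  show ((mkE w b a) k).isRight = w k
  by_cases h : w k = true
  · simp [mkE, dif_pos h, h]
  · rw [Bool.not_eq_true] at h
    simp [mkE, h]

theorem inr_getRight {A B : Type*} (x : A ⊕ B) (h : x.isRight) :
    Sum.inr (x.getRight h) = x := by
  rcases x with s | s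
  · simp at h
  · rfl

theorem inl_getLeft {A B : Type*} (x : A ⊕ B) (h : x.isLeft) :
    Sum.inl (x.getLeft h) = x := by
  rcases x with s | s
  · rfl
  · simp at h

/-- the fiber of orderings with a given word -/
def fiberEquiv (w : Fin (d + d) → Bool) :
    {e : Fin (d + d) ≃ (Fin d ⊕ Fin d) // wrd e = w}
      ≃ (({k // w k = true} ≃ Fin d) × ({k // w k = false} ≃ Fin d)) where
  toFun e :=
    ((Equiv.subtypeEquivRight (fun k =>
          iff_of_eq (congrArg (fun b => b = true) (congrFun e.2 k)).symm)).trans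
        ((e.1.subtypeEquiv (fun k => Iff.rfl)).trans rightEquiv),
      (Equiv.subtypeEquivRight (fun k =>
          iff_of_eq (congrArg (fun b => b = false) (congrFun e.2 k)).symm)).trans
        ((e.1.subtypeEquiv (fun k => Iff.rfl)).trans leftEquiv))
  invFun ba := ⟨mkE w ba.1 ba.2, wrd_mkE w ba.1 ba.2⟩
  left_inv e := by
    apply Subtype.ext
    apply Equiv.ext
    intro k
    show mkE w _ _ k = e.1 k
    by_cases h : w k = true
    · have h' : (e.1 k).isRight = true := by rw [show ((e.1 k).isRight) = w k from congrFun e.2 k]; exact h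
      rw [mkE]
      simp only [Equiv.coe_fn_mk, dif_pos h]
      exact inr_getRight (e.1 k) h'
    · rw [Bool.not_eq_true] at h
      have h2 : ((e.1 : Fin (d+d) ≃ (Fin d ⊕ Fin d)) k).isRight = w k := congrFun e.2 k
      have h' : (e.1 k).isLeft = true := by
        rcases hx : e.1 k with s | s
        · rfl
        · rw [hx] at h2; rw [← h2] at h; exact absurd h (by simp)
      have hne : ¬ w k = true := by rw [h]; exact Bool.false_ne_true
      rw [mkE]
      simp only [Equiv.coe_fn_mk]
      rw [dif_neg hne]
      exact inl_getLeft (e.1 k) h'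
  right_inv ba := by
    rcases ba with ⟨b, a⟩
    have hw := wrd_mkE w b a
    refine Prod.ext ?_ ?_
    · apply Equiv.ext
      rintro ⟨k, h⟩
      show (mkE w b a k).getRight _ = b ⟨k, h⟩
      exact getRight_eq_of (dif_pos h) _
    · apply Equiv.ext
      rintro ⟨k, h⟩
      show (mkE w b a k).getLeft _ = a ⟨k, h⟩
      have hne : ¬ w k = true := by rw [h]; exact Bool.false_ne_true
      exact getLeft_eq_of (dif_neg hne) _

theorem fiber_card (w : Fin (d + d) → Bool)
    (hw : (Finset.univ.filter fun k => w k = true).card = d) :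
    (Finset.univ.filter fun e : Fin (d + d) ≃ (Fin d ⊕ Fin d) => wrd e = w).card
      = d.factorial * d.factorial := by
  classical
  rw [← Fintype.card_subtype, Fintype.card_congr (fiberEquiv w), Fintype.card_prod]
  have ht : Fintype.card {k // w k = true} = d := by rw [Fintype.card_subtype]; exact hw
  have hf : Fintype.card {k // w k = false} = d := by
    rw [Fintype.card_subtype]
    have h2 : (Finset.univ.filter fun k => w k = true).card
        + (Finset.univ.filter fun k => w k = false).card = d + d := by
      have := Finset.card_filter_add_card_filter_not
        (s := (Finset.univ : Finset (Fin (d + d)))) (p := fun k => w k = true)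
      simp only [Bool.not_eq_true] at this
      simpa using this
    omega
  rw [Fintype.card_equiv (Fintype.equivFinOfCardEq ht),
    Fintype.card_equiv (Fintype.equivFinOfCardEq hf), ht, hf]

end fibers

section counting

open Classical in
theorem card_GW (d : ℕ) :
    (Finset.univ.filter fun w : Fin (d + d) → Bool =>
      Good (d + d) w ∧ (Finset.univ.filter fun k => w k = true).card = d).card
      = catalan d := by
  classical
  rw [← Fintype.card_subtype, Fintype.card_congr (wordEquiv d)]
  exact DyckWord.card_dyckWord_semilength_eq_catalan d

open Classical in
theorem card_goodE (d : ℕ) :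
    (Finset.univ.filter fun e : Fin (d + d) ≃ (Fin d ⊕ Fin d) =>
      Good (d + d) (wrd e)).card = catalan d * (d.factorial * d.factorial) := by
  classical
  rw [Finset.card_eq_sum_card_fiberwise (f := wrd)
    (t := Finset.univ.filter fun w : Fin (d + d) → Bool =>
      Good (d + d) w ∧ (Finset.univ.filter fun k => w k = true).card = d)
    (fun e he => by
      rw [Finset.mem_coe, Finset.mem_filter] at he ⊢
      exact ⟨Finset.mem_univ _, he.2, card_wrd_true e⟩)]
  have hstep : ∀ w ∈ (Finset.univ.filter fun w : Fin (d + d) → Bool =>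
      Good (d + d) w ∧ (Finset.univ.filter fun k => w k = true).card = d),
      ((Finset.univ.filter fun e : Fin (d + d) ≃ (Fin d ⊕ Fin d) =>
        Good (d + d) (wrd e)).filter fun e => wrd e = w).card
        = d.factorial * d.factorial := by
    intro w hw
    rw [Finset.mem_filter] at hw
    have heq : ((Finset.univ.filter fun e : Fin (d + d) ≃ (Fin d ⊕ Fin d) =>
        Good (d + d) (wrd e)).filter fun e => wrd e = w)
        = Finset.univ.filter fun e : Fin (d + d) ≃ (Fin d ⊕ Fin d) => wrd e = w := by
      ext e
      simp only [Finset.mem_filter, Finset.mem_univ, true_and]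
      constructor
      · exact fun h => h.2
      · intro h
        exact ⟨by rw [h]; exact hw.2.1, h⟩
    rw [heq]
    exact fiber_card w hw.2.2
  rw [Finset.sum_congr rfl hstep, Finset.sum_const, card_GW d, smul_eq_mul]

end counting

section measurepart

instance : IsProbabilityMeasure unif := by
  constructor
  rw [unif, Measure.restrict_apply_univ, Real.volume_Icc]
  norm_num

instance : NullSingletonClass unif := by rw [unif]; infer_instance

instance unifPi.prob (d : ℕ) : IsProbabilityMeasure (unifPi d) := by
  rw [unifPi]; infer_instance

/-- the law of `d + d` i.i.d. uniforms indexed by a sum type -/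
noncomputable def nu (d : ℕ) : Measure ((Fin d ⊕ Fin d) → ℝ) := Measure.pi fun _ => unif

instance nu.prob (d : ℕ) : IsProbabilityMeasure (nu d) := by rw [nu]; infer_instance

theorem nu_pair_null {d : ℕ} {i j : Fin d ⊕ Fin d} (hij : ¬ j = i) :
    nu d {z | z i = z j} = 0 := by
  classical
  have mp := measurePreserving_piEquivPiSubtypeProd
    (μ := fun _ : Fin d ⊕ Fin d => unif) (fun k => k = i)
  set S' : Set ((∀ _ : {k : Fin d ⊕ Fin d // k = i}, ℝ)
      × (∀ _ : {k : Fin d ⊕ Fin d // ¬ k = i}, ℝ)) :=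
    {q | q.1 ⟨i, rfl⟩ = q.2 ⟨j, hij⟩} with hS'
  have hS'm : MeasurableSet S' :=
    measurableSet_eq_fun (measurable_fst.eval) (measurable_snd.eval)
  have hpre : (MeasurableEquiv.piEquivPiSubtypeProd (fun _ : Fin d ⊕ Fin d => ℝ)
      (fun k => k = i)) ⁻¹' S' = {z | z i = z j} := rfl
  rw [show nu d = Measure.pi fun _ : Fin d ⊕ Fin d => unif from rfl, ← hpre,
    mp.measure_preimage hS'm.nullMeasurableSet]
  rw [Measure.prod_apply hS'm]
  have hz : ∀ a, (Measure.pi fun _ : {k : Fin d ⊕ Fin d // ¬ k = i} => unif)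
      (Prod.mk a ⁻¹' S') = 0 := by
    intro a
    have : Prod.mk a ⁻¹' S'
        = {r : (∀ _ : {k : Fin d ⊕ Fin d // ¬ k = i}, ℝ) | r ⟨j, hij⟩ = a ⟨i, rfl⟩} := by
      ext r
      exact eq_comm
    rw [this]
    exact Measure.pi_hyperplane _ _ _
  simp only [hz, lintegral_zero]

theorem nu_noninj_null (d : ℕ) :
    nu d {z : (Fin d ⊕ Fin d) → ℝ | ¬ Function.Injective z} = 0 := by
  have hsub : {z : (Fin d ⊕ Fin d) → ℝ | ¬ Function.Injective z}
      ⊆ ⋃ (i : Fin d ⊕ Fin d) (j : Fin d ⊕ Fin d) (_ : ¬ j = i), {z | z i = z j} := by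
    intro z hz
    simp only [Function.Injective, not_forall, Set.mem_setOf_eq] at hz
    obtain ⟨a, b, hab, hne⟩ := hz
    exact Set.mem_iUnion.mpr ⟨a, Set.mem_iUnion.mpr ⟨b, Set.mem_iUnion.mpr
      ⟨fun h => hne h.symm, hab⟩⟩⟩
  exact measure_mono_null hsub (measure_iUnion_null fun i => measure_iUnion_null fun j =>
    measure_iUnion_null fun hij => nu_pair_null hij)

theorem nu_map_perm (d : ℕ) (σ : Equiv.Perm (Fin d ⊕ Fin d)) :
    MeasurePreserving (fun z : (Fin d ⊕ Fin d) → ℝ => z ∘ σ) (nu d) (nu d) := by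
  have h := measurePreserving_piCongrLeft (μ := fun _ : Fin d ⊕ Fin d => unif)
    (α := fun _ : Fin d ⊕ Fin d => ℝ) σ
  have h2 := MeasurePreserving.symm _ h
  have hco : ⇑(MeasurableEquiv.piCongrLeft (fun _ : Fin d ⊕ Fin d => ℝ) σ).symm
      = fun z : (Fin d ⊕ Fin d) → ℝ => z ∘ σ := by
    funext z
    funext k
    exact Equiv.piCongrLeft_symm_apply (fun _ => ℝ) σ z k
  rw [hco] at h2
  exact h2

theorem cell_measure_eq {d : ℕ} (e e' : Fin (d + d) ≃ (Fin d ⊕ Fin d)) :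
    nu d (cell e) = nu d (cell e') := by
  set σ : Equiv.Perm (Fin d ⊕ Fin d) := e'.symm.trans e with hσ
  have hmp := nu_map_perm d σ
  have hpre : (fun z : (Fin d ⊕ Fin d) → ℝ => z ∘ σ) ⁻¹' (cell e') = cell e := by
    ext z
    simp only [Set.mem_preimage, cell, Set.mem_setOf_eq]
    have hfe : (z ∘ σ) ∘ ⇑e' = z ∘ ⇑e := by
      funext k
      show z (σ (e' k)) = z (e k)
      have hs : σ (e' k) = e k := by
        simp [hσ]
      rw [hs]
    rw [hfe]
  rw [← hpre, hmp.measure_preimage (measurableSet_cell e').nullMeasurableSet]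

theorem sum_cells (d : ℕ) :
    ∑ e : Fin (d + d) ≃ (Fin d ⊕ Fin d), nu d (cell e) = 1 := by
  classical
  have hdisj : Pairwise (Function.onFun Disjoint
      fun e : Fin (d + d) ≃ (Fin d ⊕ Fin d) => cell e) :=
    fun e e' h => cell_disjoint h
  have hU : nu d (⋃ e : Fin (d + d) ≃ (Fin d ⊕ Fin d), cell e) = ∑ e, nu d (cell e) := by
    rw [measure_iUnion hdisj measurableSet_cell, tsum_fintype]
  rw [← hU]
  apply le_antisymm
  · exact le_trans (measure_mono (Set.subset_univ _)) (le_of_eq measure_univ)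
  · calc (1 : ℝ≥0∞) = nu d Set.univ := measure_univ.symm
      _ ≤ nu d ((⋃ e : Fin (d + d) ≃ (Fin d ⊕ Fin d), cell e)
            ∪ {z | ¬ Function.Injective z}) := by
          apply measure_mono
          intro z _
          by_cases hz : Function.Injective z
          · obtain ⟨e, he⟩ := cell_cover hz
            exact Or.inl (Set.mem_iUnion.mpr ⟨e, he⟩)
          · exact Or.inr hz
      _ ≤ nu d (⋃ e : Fin (d + d) ≃ (Fin d ⊕ Fin d), cell e)
            + nu d {z | ¬ Function.Injective z} := measure_union_le _ _
      _ = nu d (⋃ e : Fin (d + d) ≃ (Fin d ⊕ Fin d), cell e) := by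
          rw [nu_noninj_null, add_zero]

open Classical in
theorem nu_Bset (d : ℕ) :
    nu d (Bset d) = ((Finset.univ.filter fun e : Fin (d + d) ≃ (Fin d ⊕ Fin d) =>
      Good (d + d) (wrd e)).card : ℝ≥0∞) * nu d (cell (finSumFinEquiv.symm)) := by
  classical
  set U := ⋃ e : Fin (d + d) ≃ (Fin d ⊕ Fin d), cell e with hUdef
  have hBU : nu d (Bset d) = nu d (Bset d ∩ U) := by
    have h1 : nu d (Bset d ∩ U) + nu d (Bset d \ U) = nu d (Bset d) :=
      measure_inter_add_diff _ (MeasurableSet.iUnion measurableSet_cell)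
    have h2 : nu d (Bset d \ U) = 0 := by
      apply measure_mono_null _ (nu_noninj_null d)
      rintro z ⟨_, hzU⟩
      intro hinj
      obtain ⟨e, he⟩ := cell_cover hinj
      exact hzU (Set.mem_iUnion.mpr ⟨e, he⟩)
    rw [← h1, h2, add_zero]
  rw [hBU, hUdef, Set.inter_iUnion]
  rw [measure_iUnion
    (fun e e' h => Set.disjoint_of_subset Set.inter_subset_right Set.inter_subset_right
      (cell_disjoint h))
    (fun e => measurableSet_Bset.inter (measurableSet_cell e)), tsum_fintype]
  have hterm : ∀ e : Fin (d + d) ≃ (Fin d ⊕ Fin d), nu d (Bset d ∩ cell e)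
      = if Good (d + d) (wrd e) then nu d (cell (finSumFinEquiv.symm)) else 0 := by
    intro e
    by_cases hg : Good (d + d) (wrd e)
    · rw [if_pos hg]
      have hBe : Bset d ∩ cell e = cell e := by
        apply Set.inter_eq_right.mpr
        intro z hz
        exact (cell_mem_Bset_iff hz).mpr hg
      rw [hBe]
      exact cell_measure_eq e _
    · rw [if_neg hg]
      have hBe : Bset d ∩ cell e = ∅ := by
        ext z
        simp only [Set.mem_inter_iff, Set.mem_empty_iff_false, iff_false, not_and]
        intro hzB hzc
        exact hg ((cell_mem_Bset_iff hzc).mp hzB)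
      rw [hBe]
      exact measure_empty
  rw [Finset.sum_congr rfl fun e _ => hterm e, ← Finset.sum_filter, Finset.sum_const,
    nsmul_eq_mul]

theorem cell_const (d : ℕ) :
    ((d + d).factorial : ℝ≥0∞) * nu d (cell (finSumFinEquiv.symm)) = 1 := by
  classical
  have h := sum_cells d
  have hc : ∀ e : Fin (d + d) ≃ (Fin d ⊕ Fin d),
      nu d (cell e) = nu d (cell (finSumFinEquiv.symm)) :=
    fun e => cell_measure_eq e _
  rw [Finset.sum_congr rfl (fun e _ => hc e), Finset.sum_const, nsmul_eq_mul] at h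
  rw [← h]
  congr 1
  rw [Finset.card_univ, Fintype.card_equiv finSumFinEquiv.symm, Fintype.card_fin]

theorem nu_Bset_value (d : ℕ) : nu d (Bset d) = ((d : ℝ≥0∞) + 1)⁻¹ := by
  classical
  have hnat : (d + 1) * (catalan d * (d.factorial * d.factorial))
      = (d + d).factorial := by
    have h1 : (d + 1) * catalan d = d.centralBinom :=
      succ_mul_catalan_eq_centralBinom d
    have h2 : (2 * d).choose d * d.factorial * (2 * d - d).factorial
        = (2 * d).factorial :=
      Nat.choose_mul_factorial_mul_factorial (by omega)
    have h3 : d.centralBinom = (2 * d).choose d := rfl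
    have h4 : 2 * d - d = d := by omega
    rw [h4] at h2
    calc (d + 1) * (catalan d * (d.factorial * d.factorial))
        = ((d + 1) * catalan d) * d.factorial * d.factorial := by ring
      _ = (2 * d).choose d * d.factorial * d.factorial := by rw [h1, h3]
      _ = (2 * d).factorial := h2
      _ = (d + d).factorial := by rw [two_mul]
  have hkey : nu d (Bset d) * ((d : ℝ≥0∞) + 1) = 1 := by
    rw [nu_Bset d, card_goodE d]
    have hcast : ((d : ℝ≥0∞) + 1) = ((d + 1 : ℕ) : ℝ≥0∞) := by push_cast; ring
    rw [hcast]
    calc ((catalan d * (d.factorial * d.factorial) : ℕ) : ℝ≥0∞)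
          * nu d (cell (finSumFinEquiv.symm)) * ((d + 1 : ℕ) : ℝ≥0∞)
        = (((d + 1) * (catalan d * (d.factorial * d.factorial)) : ℕ) : ℝ≥0∞)
          * nu d (cell (finSumFinEquiv.symm)) := by
          push_cast
          ring
      _ = ((d + d).factorial : ℝ≥0∞) * nu d (cell (finSumFinEquiv.symm)) := by
          rw [hnat]
      _ = 1 := cell_const d
  have ha0 : ((d : ℝ≥0∞) + 1) ≠ 0 := by simp
  have hat : ((d : ℝ≥0∞) + 1) ≠ ⊤ := by
    exact ENNReal.add_ne_top.mpr ⟨ENNReal.natCast_ne_top d, ENNReal.one_ne_top⟩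
  calc nu d (Bset d)
      = nu d (Bset d) * ((d : ℝ≥0∞) + 1) * ((d : ℝ≥0∞) + 1)⁻¹ := by
        rw [mul_assoc, ENNReal.mul_inv_cancel ha0 hat, mul_one]
    _ = 1 * ((d : ℝ≥0∞) + 1)⁻¹ := by rw [hkey]
    _ = ((d : ℝ≥0∞) + 1)⁻¹ := one_mul _

end measurepart

end OSAux

theorem stmt7 (d : ℕ) (hd : 0 < d) :
    ∫ x, FT d (sortVec x) ∂(unifPi d) = 1 / (d + 1) := by
  classical
  set A : Set ((Fin d → ℝ) × (Fin d → ℝ)) :=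
    {p | ∀ i, sortVec p.2 i ≤ sortVec p.1 i} with hA
  have hAm : MeasurableSet A := by
    have h1 : Measurable fun p : (Fin d → ℝ) × (Fin d → ℝ) => sortVec p.1 :=
      OSAux.measurable_sortVec.comp measurable_fst
    have h2 : Measurable fun p : (Fin d → ℝ) × (Fin d → ℝ) => sortVec p.2 :=
      OSAux.measurable_sortVec.comp measurable_snd
    have hAi : A = ⋂ i : Fin d,
        {p : (Fin d → ℝ) × (Fin d → ℝ) | sortVec p.2 i ≤ sortVec p.1 i} := by
      ext p; simp [hA]
    rw [hAi]
    exact MeasurableSet.iInter fun i => measurableSet_le h2.eval h1.eval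
  have hFT : ∀ x, FT d (sortVec x) = ((unifPi d) (Prod.mk x ⁻¹' A)).toReal := by
    intro x
    have hs : MeasurableSet {y : Fin d → ℝ | ∀ i, y i ≤ sortVec x i} := by
      have h : {y : Fin d → ℝ | ∀ i, y i ≤ sortVec x i}
          = ⋂ i : Fin d, {y : Fin d → ℝ | y i ≤ sortVec x i} := by ext y; simp
      rw [h]
      exact MeasurableSet.iInter fun i =>
        measurableSet_le (measurable_pi_apply i) measurable_const
    rw [FT, Measure.map_apply OSAux.measurable_sortVec hs]
    rfl
  have hprod : ∫ x, FT d (sortVec x) ∂(unifPi d)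
      = (((unifPi d).prod (unifPi d)) A).toReal := by
    rw [Measure.prod_apply hAm]
    rw [← integral_toReal ((measurable_measure_prodMk_left hAm).aemeasurable)
      (ae_of_all _ fun x => measure_lt_top _ _)]
    exact integral_congr_ae (ae_of_all _ hFT)
  have hBA : ((unifPi d).prod (unifPi d)) A = OSAux.nu d (OSAux.Bset d) := by
    have mp := measurePreserving_sumPiEquivProdPi_symm (fun _ : Fin d ⊕ Fin d => unif)
    have key := mp.measure_preimage
      (OSAux.measurableSet_Bset (d := d)).nullMeasurableSet
    have hpre : (MeasurableEquiv.sumPiEquivProdPi (fun _ : Fin d ⊕ Fin d => ℝ)).symm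
        ⁻¹' (OSAux.Bset d) = A := rfl
    rw [hpre] at key
    exact key
  rw [hprod, hBA, OSAux.nu_Bset_value d]
  rw [ENNReal.toReal_inv]
  have hr : ((d : ℝ≥0∞) + 1).toReal = (d : ℝ) + 1 := by
    rw [ENNReal.toReal_add (ENNReal.natCast_ne_top d) ENNReal.one_ne_top]
    simp
  rw [hr, one_div]
end
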